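/- arXiv:2002.09073 — 2 statements merged into one kernel-verified Lean document; each statement's English description precedes it below -/
import Mathlib

section
/- Random-size DPP error and size bound at a tuned rescaling. Let A be an m×n real matrix, 0 ≤ ε < 1, and let integers s, k satisfy 0 ≤ s < rank(A) and s < k < t_s, where t_s = s + sr_s(A). Set γ_s(k) = sqrt(1 + 2(k−s)/(t_s − k)) and α = γ_s(k)·OPT_k/((1−ε)(k−s)). If S ~ DPP((1/α)AᵀA), then E[Er_A(S)] ≤ (1 + s/(k−s))·γ_s(k)·OPT_k/(1−ε), and E[|S|] ≤ k − ε·(k−s)/γ_s(k). -/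
open scoped BigOperators
open Matrix

namespace CSSP

variable {m n : ℕ}

/-- The `j`-th column of `A` as a vector in Euclidean space. -/
noncomputable def col {ι : Type*} (A : Matrix (Fin m) ι ℝ) (j : ι) :
    EuclideanSpace ℝ (Fin m) := WithLp.toLp 2 (fun i => A i j)

/-- The span of the columns of `A` indexed by `S`. -/
noncomputable def colSpan {ι : Type*} (A : Matrix (Fin m) ι ℝ) (S : Finset ι) :
    Submodule ℝ (EuclideanSpace ℝ (Fin m)) :=
  Submodule.span ℝ {x | ∃ j ∈ S, x = col A j}

/-- `Er_A(S) = ‖A - P_S A‖_F²`, the squared Frobenius norm of the residual of projecting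
the columns of `A` onto the span of the columns indexed by `S`. -/
noncomputable def Er {ι : Type*} [Fintype ι] (A : Matrix (Fin m) ι ℝ) (S : Finset ι) : ℝ :=
  ∑ j, ‖col A j - ((colSpan A S).orthogonalProjectionOnto (col A j) : EuclideanSpace ℝ (Fin m))‖ ^ 2

/-- Principal subdeterminant `det K_{S,S}`. -/
noncomputable def pdet (K : Matrix (Fin n) (Fin n) ℝ) (S : Finset (Fin n)) : ℝ :=
  (K.submatrix (fun i : {x : Fin n // x ∈ S} => (i : Fin n))
    (fun i : {x : Fin n // x ∈ S} => (i : Fin n))).det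

/-- Expectation of `f` under the `k`-DPP with kernel `AᵀA`. -/
noncomputable def kDPPExp (A : Matrix (Fin m) (Fin n) ℝ) (k : ℕ)
    (f : Finset (Fin n) → ℝ) : ℝ :=
  (∑ S ∈ Finset.univ.filter (fun S : Finset (Fin n) => S.card = k), pdet (Aᵀ * A) S * f S) /
    (∑ S ∈ Finset.univ.filter (fun S : Finset (Fin n) => S.card = k), pdet (Aᵀ * A) S)

/-- Expectation of `f` under the (random-size) DPP with kernel `(1/α)·AᵀA`. -/
noncomputable def dppExp (A : Matrix (Fin m) (Fin n) ℝ) (α : ℝ)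
    (f : Finset (Fin n) → ℝ) : ℝ :=
  (∑ S : Finset (Fin n), α⁻¹ ^ S.card * pdet (Aᵀ * A) S * f S) /
    (1 + α⁻¹ • (Aᵀ * A)).det

/-- `lam` is the (multi-)set of eigenvalues of the symmetric matrix `K`. -/
def IsEigs (K : Matrix (Fin n) (Fin n) ℝ) (lam : Fin n → ℝ) : Prop :=
  ∃ (hK : K.IsHermitian) (σ : Equiv.Perm (Fin n)), ∀ i, lam i = hK.eigenvalues (σ i)

/-- `OPT_k = Σ_{i > k} λ_i` (1-based indexing in the paper; `lam` here is 0-based). -/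
noncomputable def opt (lam : Fin n → ℝ) (k : ℕ) : ℝ :=
  ∑ i ∈ Finset.univ.filter (fun i : Fin n => k ≤ (i : ℕ)), lam i

/-- Stable rank of order `s`: `sr_s = (Σ_{i > s} λ_i)/λ_{s+1}`. -/
noncomputable def srank (lam : Fin n → ℝ) (s : ℕ) (h : s < n) : ℝ :=
  (∑ i ∈ Finset.univ.filter (fun i : Fin n => s ≤ (i : ℕ)), lam i) / lam ⟨s, h⟩

/-- Squared Frobenius norm. -/
noncomputable def frobSq {ι : Type*} [Fintype ι] (M : Matrix (Fin m) ι ℝ) : ℝ :=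
  ∑ i, ∑ j, M i j ^ 2

/-- The squared Frobenius error of the best rank-`k` approximation of `A`. -/
noncomputable def optRank {ι : Type*} [Fintype ι] [DecidableEq ι]
    (A : Matrix (Fin m) ι ℝ) (k : ℕ) : ℝ :=
  sInf {x | ∃ B : Matrix (Fin m) ι ℝ, B.rank ≤ k ∧ x = frobSq (A - B)}


variable {ι : Type*} [Fintype ι] [DecidableEq ι]

lemma det_eq_sub_of_unit_rows (M : Matrix ι ι ℝ) (S : Finset ι)
    (h : ∀ i ∉ S, ∀ j, M i j = if i = j then 1 else 0) :
    M.det = (M.submatrix (fun a : {x // x ∈ S} => (a : ι))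
      (fun a : {x // x ∈ S} => (a : ι))).det := by
  classical
  let e : {x // x ∈ S} ⊕ {x // x ∉ S} ≃ ι := Equiv.sumCompl (· ∈ S)
  rw [← Matrix.det_submatrix_equiv_self e]
  have hM : M.submatrix e e = Matrix.fromBlocks
      (M.submatrix (fun a : {x // x ∈ S} => (a : ι)) (fun a : {x // x ∈ S} => (a : ι)))
      (M.submatrix (fun a : {x // x ∈ S} => (a : ι)) (fun a : {x // x ∉ S} => (a : ι)))
      0 1 := by
    ext i j
    cases i with
    | inl a =>
      cases j with
      | inl b => rfl
      | inr b => rfl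
    | inr a =>
      cases j with
      | inl b =>
        have hab : (a : ι) ≠ (b : ι) := fun hab => a.2 (hab ▸ b.2)
        show M (a : ι) (b : ι) = (0 : Matrix _ _ ℝ) a b
        rw [h a a.2]
        simp [hab]
      | inr b =>
        show M (a : ι) (b : ι) = (1 : Matrix {x // x ∉ S} {x // x ∉ S} ℝ) a b
        rw [h a a.2]
        by_cases hab : (a : ι) = (b : ι)
        · simp [hab, Subtype.ext hab, Matrix.one_apply]
        · rw [Matrix.one_apply, if_neg hab, if_neg (fun hc : a = b => hab (congrArg Subtype.val hc))]
  rw [hM, Matrix.det_fromBlocks_zero₂₁, Matrix.det_one, mul_one]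

lemma det_one_add_smul_eq_sum (K : Matrix ι ι ℝ) (x : ℝ) :
    (1 + x • K).det = ∑ S : Finset ι, x ^ S.card *
      (K.submatrix (fun a : {y // y ∈ S} => (a : ι)) (fun a : {y // y ∈ S} => (a : ι))).det := by
  classical
  have hrows : (1 + x • K : Matrix ι ι ℝ) =
      Matrix.of ((fun i => (x • K) i) + (fun i => (1 : Matrix ι ι ℝ) i)) := by
    ext i j; simp [Matrix.add_apply]; ring
  have hdet : (1 + x • K).det =
      (Matrix.detRowAlternating ((fun i => (x • K) i) + (fun i => (1 : Matrix ι ι ℝ) i)) : ℝ) := by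
    rw [hrows]; rfl
  have expand := MultilinearMap.map_add_univ
    (Matrix.detRowAlternating (n := ι) (R := ℝ)).toMultilinearMap
    (fun i => (x • K) i) (fun i => (1 : Matrix ι ι ℝ) i)
  simp only [AlternatingMap.coe_multilinearMap] at expand
  rw [hdet, expand]
  refine Finset.sum_congr rfl fun S _ => ?_
  have hSdet : (Matrix.detRowAlternating
      (S.piecewise (fun i => (x • K) i) (fun i => (1 : Matrix ι ι ℝ) i)) : ℝ) =
      (Matrix.of (S.piecewise (fun i => (x • K) i) (fun i => (1 : Matrix ι ι ℝ) i))).det := rfl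
  rw [hSdet]
  set M : Matrix ι ι ℝ := Matrix.of (S.piecewise (fun i => (x • K) i) (fun i => (1 : Matrix ι ι ℝ) i))
  have hM : ∀ i ∉ S, ∀ j, M i j = if i = j then 1 else 0 := by
    intro i hi j
    simp only [M, Matrix.of_apply, Finset.piecewise_eq_of_notMem _ _ _ hi]
    exact Matrix.one_apply
  rw [det_eq_sub_of_unit_rows M S hM]
  have hsub : M.submatrix (fun a : {y // y ∈ S} => (a : ι)) (fun a : {y // y ∈ S} => (a : ι)) =
      x • K.submatrix (fun a : {y // y ∈ S} => (a : ι)) (fun a : {y // y ∈ S} => (a : ι)) := by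
    ext a b
    simp only [Matrix.submatrix_apply, M, Matrix.of_apply,
      Finset.piecewise_eq_of_mem _ _ _ a.2, Matrix.smul_apply, smul_eq_mul]
  rw [hsub, Matrix.det_smul, Fintype.card_coe]

lemma det_one_add_smul_eq_prod_eig (K : Matrix ι ι ℝ) (hK : K.IsHermitian) (x : ℝ) :
    (1 + x • K).det = ∏ i, (1 + x * hK.eigenvalues i) := by
  classical
  set U : Matrix ι ι ℝ := (Matrix.IsHermitian.eigenvectorUnitary hK : Matrix ι ι ℝ)
  have hU : U * star U = 1 := (Matrix.mem_unitaryGroup_iff).mp (Matrix.IsHermitian.eigenvectorUnitary hK).2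
  have hspec : K = U * Matrix.diagonal (RCLike.ofReal ∘ hK.eigenvalues) * star U :=
    hK.spectral_theorem
  have key : (1 + x • K) = U * (1 + x • Matrix.diagonal (RCLike.ofReal ∘ hK.eigenvalues)) * star U := by
    rw [Matrix.mul_add, Matrix.add_mul, Matrix.mul_one, hU]
    rw [Matrix.mul_smul, Matrix.smul_mul, ← hspec]
  rw [key, Matrix.det_mul, Matrix.det_mul, mul_comm (U.det), mul_assoc, ← Matrix.det_mul, hU,
    Matrix.det_one, mul_one]
  have hdiag : (1 + x • Matrix.diagonal (RCLike.ofReal ∘ hK.eigenvalues) : Matrix ι ι ℝ) =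
      Matrix.diagonal (fun i => 1 + x * hK.eigenvalues i) := by
    ext i j
    by_cases hij : i = j
    · subst hij; simp [Matrix.one_apply, Matrix.diagonal]
    · simp [Matrix.one_apply, Matrix.diagonal, hij]
  rw [hdiag, Matrix.det_diagonal]

open RealInnerProductSpace in
lemma det_gram_update {m : ℕ} (v : ι → EuclideanSpace ℝ (Fin m)) (a : ι) (μ : ι → ℝ)
    (hμ : μ a = 0) :
    (Matrix.of fun b c => ⟪v b, v c⟫).det =
      (Matrix.of fun b c => ⟪Function.update v a (v a - ∑ p, μ p • v p) b,
        Function.update v a (v a - ∑ p, μ p • v p) c⟫).det := by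
  classical
  set w : ι → EuclideanSpace ℝ (Fin m) := Function.update v a (v a - ∑ p, μ p • v p) with hw
  set L : Matrix ι ι ℝ := Matrix.of fun b c => (if b = c then (1:ℝ) else 0) - (if b = a then μ c else 0) with hL
  have hdetL : L.det = 1 := by
    have h1 : ∀ i ∉ ({a} : Finset ι), ∀ j, L i j = if i = j then 1 else 0 := by
      intro i hi j
      simp only [Finset.mem_singleton] at hi
      simp [hL, hi]
    rw [det_eq_sub_of_unit_rows L {a} h1]
    haveI : Unique {x // x ∈ ({a} : Finset ι)} :=
      ⟨⟨⟨a, Finset.mem_singleton_self a⟩⟩, fun b => Subtype.ext (Finset.mem_singleton.mp b.2)⟩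
    rw [Matrix.det_unique]
    have hd : ((default : {x // x ∈ ({a} : Finset ι)}) : ι) = a :=
      Finset.mem_singleton.mp (default : {x // x ∈ ({a} : Finset ι)}).2
    simp [hL, hd, hμ]
  have hvw : ∀ b, w b = ∑ p, L b p • v p := by
    intro b
    by_cases hb : b = a
    · subst hb
      simp only [hw, Function.update_self, hL, Matrix.of_apply]
      rw [Finset.sum_congr rfl (fun p _ => sub_smul _ _ _), Finset.sum_sub_distrib]
      congr 1
      · rw [Finset.sum_congr rfl (fun p _ => ite_smul _ _ _ _)]
        simp [Finset.sum_ite_eq]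
    · simp only [hw, Function.update_of_ne hb, hL, Matrix.of_apply, if_neg hb, sub_zero]
      rw [Finset.sum_congr rfl (fun p _ => ite_smul _ _ _ _)]
      simp [Finset.sum_ite_eq]
  have hgram : (Matrix.of fun b c => ⟪w b, w c⟫) =
      L * (Matrix.of fun b c => ⟪v b, v c⟫) * Lᵀ := by
    ext b c
    simp only [Matrix.mul_apply, Matrix.transpose_apply, Matrix.of_apply]
    rw [hvw b, hvw c, sum_inner]
    have lhs : ∀ p : ι, (⟪L b p • v p, ∑ q, L c q • v q⟫ : ℝ) =
        ∑ q, L b p * L c q * ⟪v p, v q⟫ := by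
      intro p
      rw [inner_sum]
      refine Finset.sum_congr rfl fun q _ => ?_
      rw [real_inner_smul_left, real_inner_smul_right]
      ring
    rw [Finset.sum_congr rfl fun p _ => lhs p]
    rw [Finset.sum_comm]
    refine Finset.sum_congr rfl fun q _ => ?_
    rw [Finset.sum_mul]
    refine Finset.sum_congr rfl fun p _ => ?_
    ring
  rw [hgram, Matrix.det_mul, Matrix.det_mul, Matrix.det_transpose, hdetL, one_mul, mul_one]

open RealInnerProductSpace in
lemma det_gram_block {m : ℕ} (v : ι → EuclideanSpace ℝ (Fin m)) (a : ι)
    (h : ∀ b, b ≠ a → ⟪v a, v b⟫ = 0) :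
    (Matrix.of fun b c => ⟪v b, v c⟫).det =
      ‖v a‖ ^ 2 * (Matrix.of fun (b c : {x // ¬ x = a}) => ⟪v b, v c⟫).det := by
  classical
  let e : {x // x = a} ⊕ {x // ¬ x = a} ≃ ι := Equiv.sumCompl (· = a)
  rw [← Matrix.det_submatrix_equiv_self e]
  have hsub : (Matrix.of fun b c => ⟪v b, v c⟫).submatrix e e =
      Matrix.fromBlocks (Matrix.of fun (b c : {x // x = a}) => ⟪v b, v c⟫) 0
        0 (Matrix.of fun (b c : {x // ¬ x = a}) => ⟪v b, v c⟫) := by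
    ext i j
    cases i with
    | inl b =>
      cases j with
      | inl c => rfl
      | inr c =>
        show ⟪v b, v c⟫ = (0 : Matrix _ _ ℝ) b c
        have hb : (b : ι) = a := b.2
        rw [hb]
        simp [h _ c.2]
    | inr b =>
      cases j with
      | inl c =>
        show ⟪v b, v c⟫ = (0 : Matrix _ _ ℝ) b c
        have hc : (c : ι) = a := c.2
        rw [hc, real_inner_comm]
        simp [h _ b.2]
      | inr c => rfl
  rw [hsub, Matrix.det_fromBlocks_zero₁₂]
  haveI : Unique {x // x = a} := ⟨⟨⟨a, rfl⟩⟩, fun b => Subtype.ext b.2⟩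
  rw [Matrix.det_unique]
  simp only [Matrix.of_apply]
  have : ((default : {x // x = a}) : ι) = a := (default : {x // x = a}).2
  rw [this, real_inner_self_eq_norm_sq]

open scoped RealInnerProductSpace

lemma gram_entry (A : Matrix (Fin m) (Fin n) ℝ) (b c : Fin n) :
    (Aᵀ * A) b c = ⟪col A b, col A c⟫ := by
  simp only [Matrix.mul_apply, Matrix.transpose_apply, PiLp.inner_apply, RCLike.inner_apply,
    starRingEnd_apply, star_trivial, col, WithLp.ofLp_toLp]
  exact Finset.sum_congr rfl fun _ _ => mul_comm _ _

lemma colSpan_eq_span_range (A : Matrix (Fin m) (Fin n) ℝ) (S : Finset (Fin n)) :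
    colSpan A S = Submodule.span ℝ (Set.range (fun a : {x : Fin n // x ∈ S} => col A ↑a)) := by
  unfold colSpan
  congr 1
  ext x
  constructor
  · rintro ⟨j, hj, rfl⟩; exact ⟨⟨j, hj⟩, rfl⟩
  · rintro ⟨⟨j, hj⟩, rfl⟩; exact ⟨j, hj, rfl⟩

/-- The residual of column `j` against the span of columns in `S`. -/
noncomputable def res (A : Matrix (Fin m) (Fin n) ℝ) (S : Finset (Fin n)) (j : Fin n) :
    EuclideanSpace ℝ (Fin m) :=
  col A j - ((colSpan A S).orthogonalProjectionOnto (col A j) : EuclideanSpace ℝ (Fin m))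

lemma res_eq_zero_of_mem (A : Matrix (Fin m) (Fin n) ℝ) {S : Finset (Fin n)} {j : Fin n}
    (hj : j ∈ S) : res A S j = 0 := by
  have hmem : col A j ∈ colSpan A S := Submodule.subset_span ⟨j, hj, rfl⟩
  rw [res, sub_eq_zero]
  exact (Submodule.starProjection_eq_self_iff.mpr hmem).symm

lemma res_inner_eq_zero (A : Matrix (Fin m) (Fin n) ℝ) (S : Finset (Fin n)) (j : Fin n)
    {u : EuclideanSpace ℝ (Fin m)} (hu : u ∈ colSpan A S) :
    ⟪res A S j, u⟫ = 0 := by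
  have h := Submodule.sub_starProjection_mem_orthogonal (K := colSpan A S) (col A j)
  rw [real_inner_comm]
  exact (Submodule.mem_orthogonal _ _).mp h u hu

lemma pdet_insert (A : Matrix (Fin m) (Fin n) ℝ) {S : Finset (Fin n)} {j : Fin n}
    (hj : j ∉ S) :
    pdet (Aᵀ * A) (insert j S) = pdet (Aᵀ * A) S * ‖res A S j‖ ^ 2 := by
  classical
  set T : Finset (Fin n) := insert j S with hT
  set a : {x : Fin n // x ∈ T} := ⟨j, Finset.mem_insert_self j S⟩ with ha
  set v : {x : Fin n // x ∈ T} → EuclideanSpace ℝ (Fin m) := fun b => col A ↑b with hv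
  -- coefficients of the projection
  have hP : ((colSpan A S).orthogonalProjectionOnto (col A j) : EuclideanSpace ℝ (Fin m)) ∈
      Submodule.span ℝ (Set.range (fun b : {x : Fin n // x ∈ S} => col A ↑b)) := by
    rw [← colSpan_eq_span_range]
    exact ((colSpan A S).orthogonalProjectionOnto (col A j)).2
  obtain ⟨c, hc⟩ := (Submodule.mem_span_range_iff_exists_fun ℝ).mp hP
  set μ : {x : Fin n // x ∈ T} → ℝ := fun b => if hb : (b : Fin n) ∈ S then c ⟨b, hb⟩ else 0
    with hμdef
  have hμa : μ a = 0 := by simp [hμdef, ha, hj]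
  -- the combination equals the projection
  set g : Fin n → EuclideanSpace ℝ (Fin m) :=
    fun b => (if hb : b ∈ S then c ⟨b, hb⟩ else 0) • col A b with hg
  have hsum : ∑ p : {x : Fin n // x ∈ T}, μ p • v p =
      ((colSpan A S).orthogonalProjectionOnto (col A j) : EuclideanSpace ℝ (Fin m)) := by
    have h1 : ∑ p : {x : Fin n // x ∈ T}, μ p • v p = ∑ b ∈ T, g b := by
      rw [← Finset.sum_coe_sort T g]
    rw [h1, hT, Finset.sum_insert hj]
    have hgj : g j = 0 := by simp [hg, hj]
    rw [hgj, zero_add, ← Finset.sum_coe_sort S g, ← hc]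
    refine Finset.sum_congr rfl fun b _ => ?_
    simp [hg, b.2]
  -- gram identity for T
  have hgramT : pdet (Aᵀ * A) T =
      (Matrix.of fun b c : {x : Fin n // x ∈ T} => (⟪v b, v c⟫ : ℝ)).det := by
    have hmat : (Matrix.of fun b c : {x : Fin n // x ∈ T} => (⟪v b, v c⟫ : ℝ)) =
        (Aᵀ * A).submatrix (fun i : {x : Fin n // x ∈ T} => (i : Fin n))
          (fun i : {x : Fin n // x ∈ T} => (i : Fin n)) := by
      ext b c
      exact (gram_entry A ↑b ↑c).symm
    rw [pdet, hmat]
  set w : {x : Fin n // x ∈ T} → EuclideanSpace ℝ (Fin m) :=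
    Function.update v a (v a - ∑ p, μ p • v p) with hw
  have hwa : w a = res A S j := by
    rw [hw, Function.update_self, hsum]
    rfl
  have hwb : ∀ b : {x : Fin n // x ∈ T}, b ≠ a → w b = col A ↑b := fun b hb => by
    rw [hw, Function.update_of_ne hb]
  have hbmem : ∀ b : {x : Fin n // x ∈ T}, b ≠ a → (b : Fin n) ∈ S := by
    intro b hb
    rcases Finset.mem_insert.mp b.2 with h | h
    · exact absurd (Subtype.ext h) hb
    · exact h
  have horth : ∀ b : {x : Fin n // x ∈ T}, b ≠ a → (⟪w a, w b⟫ : ℝ) = 0 := by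
    intro b hb
    rw [hwa, hwb b hb]
    exact res_inner_eq_zero A S j (Submodule.subset_span ⟨b, hbmem b hb, rfl⟩)
  have step1 : (Matrix.of fun b c : {x : Fin n // x ∈ T} => (⟪v b, v c⟫ : ℝ)).det =
      (Matrix.of fun b c : {x : Fin n // x ∈ T} => (⟪w b, w c⟫ : ℝ)).det :=
    det_gram_update v a μ hμa
  have step2 : (Matrix.of fun b c : {x : Fin n // x ∈ T} => (⟪w b, w c⟫ : ℝ)).det =
      ‖w a‖ ^ 2 *
      (Matrix.of fun b c : {x : {x : Fin n // x ∈ T} // ¬ x = a} => (⟪w ↑b, w ↑c⟫ : ℝ)).det :=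
    det_gram_block w a horth
  -- identify the reduced gram determinant with pdet S
  have step3 : (Matrix.of fun b c : {x : {x : Fin n // x ∈ T} // ¬ x = a} =>
      (⟪w ↑b, w ↑c⟫ : ℝ)).det = pdet (Aᵀ * A) S := by
    let e : {x : {x : Fin n // x ∈ T} // ¬ x = a} ≃ {y : Fin n // y ∈ S} :=
      { toFun := fun b => ⟨↑↑b, hbmem ↑b b.2⟩
        invFun := fun y => ⟨⟨↑y, Finset.mem_insert_of_mem y.2⟩, fun h => by
          have : (y : Fin n) = j := congrArg Subtype.val h
          exact hj (this ▸ y.2)⟩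
        left_inv := fun b => Subtype.ext (Subtype.ext rfl)
        right_inv := fun y => rfl }
    have : (Matrix.of fun b c : {x : {x : Fin n // x ∈ T} // ¬ x = a} =>
        (⟪w ↑b, w ↑c⟫ : ℝ)).det =
        (((Aᵀ * A).submatrix (fun i : {x : Fin n // x ∈ S} => (i : Fin n))
          (fun i : {x : Fin n // x ∈ S} => (i : Fin n))).submatrix e e).det := by
      congr 1
      ext b c
      simp only [Matrix.of_apply, Matrix.submatrix_apply]
      rw [hwb _ b.2, hwb _ c.2, gram_entry A]
      rfl
    rw [this, Matrix.det_submatrix_equiv_self e]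
    rfl
  rw [hgramT, step1, step2, step3, hwa, mul_comm]

lemma insert_erase_sum (F : Finset (Fin n) → ℝ) :
    ∑ S : Finset (Fin n), ∑ j ∈ Sᶜ, F (insert j S) =
      ∑ T : Finset (Fin n), (T.card : ℝ) * F T := by
  classical
  have hrhs : ∀ T : Finset (Fin n), (T.card : ℝ) * F T = ∑ j ∈ T, F T := by
    intro T
    rw [Finset.sum_const, nsmul_eq_mul]
  rw [Finset.sum_congr rfl fun T _ => hrhs T]
  rw [Finset.sum_sigma' Finset.univ (fun S => Sᶜ) (fun x y => F (insert y x)),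
    Finset.sum_sigma' Finset.univ (fun T => T) (fun x y => F x)]
  refine Finset.sum_nbij' (fun x => ⟨insert x.2 x.1, x.2⟩) (fun x => ⟨x.1.erase x.2, x.2⟩)
    ?_ ?_ ?_ ?_ ?_
  · rintro ⟨S, j⟩ hx
    simp only [Finset.mem_sigma, Finset.mem_univ, true_and, Finset.mem_compl] at hx ⊢
    exact Finset.mem_insert_self _ _
  · rintro ⟨T, j⟩ hx
    simp only [Finset.mem_sigma, Finset.mem_univ, true_and, Finset.mem_compl] at hx ⊢
    exact Finset.notMem_erase _ _
  · rintro ⟨S, j⟩ hx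
    simp only [Finset.mem_sigma, Finset.mem_univ, true_and, Finset.mem_compl] at hx
    exact Sigma.ext (by simp [Finset.erase_insert hx]) (by simp)
  · rintro ⟨T, j⟩ hx
    simp only [Finset.mem_sigma, Finset.mem_univ, true_and] at hx
    exact Sigma.ext (by simp [Finset.insert_erase hx]) (by simp)
  · rintro ⟨S, j⟩ hx
    rfl

lemma numer_Er_eq (A : Matrix (Fin m) (Fin n) ℝ) {α : ℝ} (hα : α ≠ 0) :
    ∑ S : Finset (Fin n), α⁻¹ ^ S.card * pdet (Aᵀ * A) S * Er A S =
      α * ∑ T : Finset (Fin n), α⁻¹ ^ T.card * pdet (Aᵀ * A) T * T.card := by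
  classical
  have hEr : ∀ S : Finset (Fin n), Er A S = ∑ j, ‖res A S j‖ ^ 2 := fun S => rfl
  have step : ∀ S : Finset (Fin n),
      α⁻¹ ^ S.card * pdet (Aᵀ * A) S * Er A S =
        ∑ j ∈ Sᶜ, α * (α⁻¹ ^ (insert j S).card * pdet (Aᵀ * A) (insert j S)) := by
    intro S
    rw [hEr, Finset.mul_sum]
    rw [← Finset.sum_add_sum_compl S
      (fun j => α⁻¹ ^ S.card * pdet (Aᵀ * A) S * ‖res A S j‖ ^ 2)]
    have h0 : ∑ j ∈ S, α⁻¹ ^ S.card * pdet (Aᵀ * A) S * ‖res A S j‖ ^ 2 = 0 := by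
      refine Finset.sum_eq_zero fun j hj => ?_
      rw [res_eq_zero_of_mem A hj]
      simp
    rw [h0, zero_add]
    refine Finset.sum_congr rfl fun j hj => ?_
    have hjS : j ∉ S := Finset.mem_compl.mp hj
    rw [pdet_insert A hjS, Finset.card_insert_of_notMem hjS, pow_succ]
    field_simp
    rw [pow_succ (1 / α) S.card, show α * pdet (Aᵀ * A) S * ‖res A S j‖ ^ 2 * ((1 / α) ^ S.card * (1 / α)) =
      (α * (1 / α)) * ((1 / α) ^ S.card * pdet (Aᵀ * A) S * ‖res A S j‖ ^ 2) by ring,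
      mul_one_div_cancel hα, one_mul]
  rw [Finset.sum_congr rfl fun S _ => step S]
  simp_rw [← Finset.mul_sum]
  congr 1
  rw [insert_erase_sum (fun T => α⁻¹ ^ T.card * pdet (Aᵀ * A) T)]
  refine Finset.sum_congr rfl fun T _ => ?_
  ring

lemma det_prod_lam (A : Matrix (Fin m) (Fin n) ℝ) (lam : Fin n → ℝ)
    (heig : IsEigs (Aᵀ * A) lam) (x : ℝ) :
    (1 + x • (Aᵀ * A)).det = ∏ i, (1 + x * lam i) := by
  obtain ⟨hK, σ, hσ⟩ := heig
  rw [det_one_add_smul_eq_prod_eig (Aᵀ * A) hK x]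
  rw [← Equiv.prod_comp σ (fun i => 1 + x * hK.eigenvalues i)]
  exact Finset.prod_congr rfl fun i _ => by rw [hσ i]

lemma derivative_finset_prod {ι : Type*} [DecidableEq ι] (s : Finset ι) (f : ι → Polynomial ℝ) :
    Polynomial.derivative (∏ i ∈ s, f i) =
      ∑ i ∈ s, (∏ j ∈ s.erase i, f j) * Polynomial.derivative (f i) := by
  classical
  induction s using Finset.induction with
  | empty => simp
  | @insert a s ha ih =>
    rw [Finset.prod_insert ha, Polynomial.derivative_mul, ih, Finset.sum_insert ha,
      Finset.erase_insert ha, Finset.mul_sum]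
    congr 1
    · exact mul_comm _ _
    · refine Finset.sum_congr rfl fun i hi => ?_
      have hia : i ≠ a := fun hia => ha (hia ▸ hi)
      rw [Finset.erase_insert_of_ne (Ne.symm hia),
        Finset.prod_insert (fun hc => ha (Finset.mem_of_mem_erase hc))]
      ring

lemma det_one_add_smul_pdet (K : Matrix (Fin n) (Fin n) ℝ) (x : ℝ) :
    (1 + x • K).det = ∑ S : Finset (Fin n), x ^ S.card * pdet K S :=
  det_one_add_smul_eq_sum K x

lemma poly_eq (A : Matrix (Fin m) (Fin n) ℝ) (lam : Fin n → ℝ)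
    (heig : IsEigs (Aᵀ * A) lam) :
    (∑ S : Finset (Fin n), Polynomial.C (pdet (Aᵀ * A) S) * Polynomial.X ^ S.card) =
      ∏ i, (Polynomial.C (lam i) * Polynomial.X + 1) := by
  apply Polynomial.funext
  intro x
  rw [Polynomial.eval_finset_sum, Polynomial.eval_prod]
  have h1 : ∀ S : Finset (Fin n),
      (Polynomial.C (pdet (Aᵀ * A) S) * Polynomial.X ^ S.card).eval x =
        x ^ S.card * pdet (Aᵀ * A) S := by
    intro S
    rw [Polynomial.eval_mul, Polynomial.eval_C, Polynomial.eval_pow, Polynomial.eval_X, mul_comm]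
  rw [Finset.sum_congr rfl fun S _ => h1 S, ← det_one_add_smul_pdet (Aᵀ * A) x,
    det_prod_lam A lam heig x]
  refine Finset.prod_congr rfl fun i _ => ?_
  rw [Polynomial.eval_add, Polynomial.eval_mul, Polynomial.eval_C, Polynomial.eval_X,
    Polynomial.eval_one, mul_comm, add_comm]

lemma numer_card_eq (A : Matrix (Fin m) (Fin n) ℝ) (lam : Fin n → ℝ)
    (heig : IsEigs (Aᵀ * A) lam) {x : ℝ} (hpos : ∀ i, 0 < 1 + lam i * x) :
    ∑ S : Finset (Fin n), x ^ S.card * pdet (Aᵀ * A) S * S.card =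
      (∑ i, lam i * x / (1 + lam i * x)) * ∏ i, (1 + x * lam i) := by
  classical
  have key : ∑ S : Finset (Fin n), x ^ S.card * pdet (Aᵀ * A) S * S.card =
      x * (Polynomial.derivative
        (∑ S : Finset (Fin n), Polynomial.C (pdet (Aᵀ * A) S) * Polynomial.X ^ S.card)).eval x := by
    rw [Polynomial.derivative_sum, Polynomial.eval_finset_sum, Finset.mul_sum]
    refine Finset.sum_congr rfl fun S _ => ?_
    rw [Polynomial.derivative_C_mul_X_pow]
    simp only [Polynomial.eval_mul, Polynomial.eval_C, Polynomial.eval_pow, Polynomial.eval_X]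
    rcases Nat.eq_zero_or_pos S.card with h | h
    · simp [h]
    · obtain ⟨c, hc⟩ := Nat.exists_eq_succ_of_ne_zero (Nat.pos_iff_ne_zero.mp h)
      rw [hc, Nat.succ_sub_one, pow_succ]
      push_cast
      ring
  rw [key, poly_eq A lam heig, derivative_finset_prod]
  have hder : ∀ i : Fin n,
      Polynomial.derivative (Polynomial.C (lam i) * Polynomial.X + 1) = Polynomial.C (lam i) := by
    intro i
    rw [Polynomial.derivative_add, Polynomial.derivative_one, add_zero, Polynomial.derivative_mul,
      Polynomial.derivative_C, Polynomial.derivative_X, zero_mul, mul_one, zero_add]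
  rw [Polynomial.eval_finset_sum, Finset.mul_sum, Finset.sum_mul]
  refine Finset.sum_congr rfl fun i _ => ?_
  rw [hder i]
  simp only [Polynomial.eval_mul, Polynomial.eval_prod, Polynomial.eval_add, Polynomial.eval_C,
    Polynomial.eval_X, Polynomial.eval_one]
  have hprod : ∏ j, (1 + x * lam j) =
      (lam i * x + 1) * ∏ j ∈ Finset.univ.erase i, (lam j * x + 1) := by
    rw [← Finset.mul_prod_erase Finset.univ (fun j => 1 + x * lam j) (Finset.mem_univ i)]
    rw [mul_comm (lam i) x, add_comm 1 (x * lam i)]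
    exact congrArg _ (Finset.prod_congr rfl fun j _ => by ring)
  have hne : lam i * x + 1 ≠ 0 := by
    have := hpos i
    rw [add_comm] at this
    exact ne_of_gt this
  rw [hprod, add_comm 1 (lam i * x), div_mul_eq_mul_div, eq_div_iff hne]
  ring

lemma lam_nonneg (A : Matrix (Fin m) (Fin n) ℝ) (lam : Fin n → ℝ)
    (heig : IsEigs (Aᵀ * A) lam) : ∀ i, 0 ≤ lam i := by
  obtain ⟨hK, σ, hσ⟩ := heig
  intro i
  rw [hσ i]
  have hpsd : (Aᵀ * A).PosSemidef := by
    have := Matrix.posSemidef_conjTranspose_mul_self A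
    rwa [Matrix.conjTranspose_eq_transpose_of_trivial] at this
  exact hpsd.eigenvalues_nonneg _

lemma lam_s_pos (A : Matrix (Fin m) (Fin n) ℝ) (lam : Fin n → ℝ) (hlam : Antitone lam)
    (heig : IsEigs (Aᵀ * A) lam) {s : ℕ} (hsn : s < n) (hs : s < A.rank) :
    0 < lam ⟨s, hsn⟩ := by
  rcases lt_or_ge 0 (lam ⟨s, hsn⟩) with h | h
  · exact h
  exfalso
  have hnn := lam_nonneg A lam heig
  have h0 : lam ⟨s, hsn⟩ = 0 := le_antisymm h (hnn _)
  obtain ⟨hK, σ, hσ⟩ := heig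
  have hrank : A.rank = Fintype.card {i // hK.eigenvalues i ≠ 0} := by
    rw [← Matrix.rank_transpose_mul_self A]
    exact hK.rank_eq_card_non_zero_eigs
  have hcard : Fintype.card {i // hK.eigenvalues i ≠ 0} =
      Fintype.card {i // lam i ≠ 0} := by
    refine Fintype.card_congr (Equiv.subtypeEquiv σ.symm fun a => ?_)
    rw [hσ (σ.symm a), Equiv.apply_symm_apply]
  have hzero : ∀ i : Fin n, lam i ≠ 0 → i.val < s := by
    intro i hi
    by_contra hge
    push_neg at hge
    have : lam i ≤ lam ⟨s, hsn⟩ := hlam (by simpa [Fin.le_def] using hge)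
    exact hi (le_antisymm (h0 ▸ this) (hnn i))
  have hle : Fintype.card {i // lam i ≠ 0} ≤ s := by
    classical
    rw [Fintype.card_subtype]
    calc (Finset.univ.filter (fun i : Fin n => lam i ≠ 0)).card
        ≤ (Finset.range s).card := by
          refine Finset.card_le_card_of_injOn (fun i => i.val) ?_ ?_
          · intro i hi
            simp only [Finset.mem_coe, Finset.mem_filter, Finset.mem_univ, true_and] at hi
            simpa using hzero i hi
          · intro a _ b _ hab
            exact Fin.ext hab
      _ = s := Finset.card_range s
  rw [hrank, hcard] at hs
  exact absurd hs (not_lt.mpr hle)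

set_option maxHeartbeats 1000000 in
/-- Random-size DPP error and size bound at the tuned rescaling `α = γ_s(k)·OPT_k/((1−ε)(k−s))`:
`E[Er_A(S)] ≤ (1 + s/(k−s))·γ_s(k)·OPT_k/(1−ε)` and `E[|S|] ≤ k − ε(k−s)/γ_s(k)`. -/
theorem dpp_error_and_size {m n : ℕ} (A : Matrix (Fin m) (Fin n) ℝ)
    (lam : Fin n → ℝ) (hlam : Antitone lam) (heig : IsEigs (Aᵀ * A) lam)
    (ε : ℝ) (hε0 : 0 ≤ ε) (hε1 : ε < 1)
    (s : ℕ) (hsn : s < n) (hs : s < A.rank)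
    (k : ℕ) (hsk : s < k) (hkt : (k : ℝ) < (s : ℝ) + srank lam s hsn)
    (γ α : ℝ)
    (hγ : γ = Real.sqrt (1 + 2 * ((k : ℝ) - (s : ℝ)) / (((s : ℝ) + srank lam s hsn) - (k : ℝ))))
    (hα : α = γ * opt lam k / ((1 - ε) * ((k : ℝ) - (s : ℝ)))) :
    dppExp A α (Er A) ≤ (1 + (s : ℝ) / ((k : ℝ) - (s : ℝ))) * γ * opt lam k / (1 - ε) ∧
      dppExp A α (fun S => (S.card : ℝ)) ≤ (k : ℝ) - ε * ((k : ℝ) - (s : ℝ)) / γ := by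
  classical
  have hlam0 : 0 < lam ⟨s, hsn⟩ := lam_s_pos A lam hlam heig hsn hs
  set lam0 : ℝ := lam ⟨s, hsn⟩ with hlam0def
  have hnn := lam_nonneg A lam heig
  have hks : (0:ℝ) < (k:ℝ) - s := by
    have : (s:ℝ) < k := by exact_mod_cast hsk
    linarith
  have hε : (0:ℝ) < 1 - ε := by linarith
  set Tsum : ℝ := ∑ i ∈ Finset.univ.filter (fun i : Fin n => s ≤ (i:ℕ)), lam i with hTdef
  have hsrank : srank lam s hsn = Tsum / lam0 := rfl
  set OPT : ℝ := opt lam k with hOPTdef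
  rw [hsrank] at hkt hγ
  set tk : ℝ := ((s:ℝ) + Tsum / lam0) - k with htkdef
  have htk : 0 < tk := by rw [htkdef]; linarith
  -- middle block
  set mid : Finset (Fin n) :=
    Finset.univ.filter (fun i : Fin n => s ≤ (i:ℕ) ∧ (i:ℕ) < k) with hmid
  have hmidcard : (mid.card : ℝ) ≤ (k:ℝ) - s := by
    have h1 : mid.card ≤ (Finset.Ico s k).card := by
      refine Finset.card_le_card_of_injOn (fun i => (i:ℕ)) ?_ ?_
      · intro i hi
        simp only [hmid, Finset.mem_coe, Finset.mem_filter, Finset.mem_univ, true_and] at hi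
        simp [Finset.mem_Ico, hi.1, hi.2]
      · intro a _ b _ hab
        exact Fin.ext hab
    have h2 : (Finset.Ico s k).card = k - s := Nat.card_Ico s k
    calc (mid.card:ℝ) ≤ ((k - s : ℕ):ℝ) := by exact_mod_cast h1.trans_eq h2
      _ = (k:ℝ) - s := by rw [Nat.cast_sub hsk.le]
  have hmidsum : ∑ i ∈ mid, lam i ≤ ((k:ℝ) - s) * lam0 := by
    have hb : ∀ i ∈ mid, lam i ≤ lam0 := by
      intro i hi
      simp only [hmid, Finset.mem_filter, Finset.mem_univ, true_and] at hi
      exact hlam (by simpa [Fin.le_def] using hi.1)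
    calc ∑ i ∈ mid, lam i ≤ mid.card • lam0 := Finset.sum_le_card_nsmul _ _ _ hb
      _ = (mid.card : ℝ) * lam0 := nsmul_eq_mul _ _
      _ ≤ ((k:ℝ) - s) * lam0 := mul_le_mul_of_nonneg_right hmidcard hlam0.le
  have hsplit : Tsum = (∑ i ∈ mid, lam i) + OPT := by
    rw [hTdef, hOPTdef, opt,
      ← Finset.sum_filter_add_sum_filter_not
        (Finset.univ.filter (fun i : Fin n => s ≤ (i:ℕ))) (fun i => (i:ℕ) < k) lam]
    congr 1
    · rw [Finset.filter_filter]
    · rw [Finset.filter_filter]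
      congr 1
      ext i
      simp only [Finset.mem_filter, Finset.mem_univ, true_and]
      omega
  have hT : Tsum = (tk + (k:ℝ) - s) * lam0 := by
    have h1 : Tsum / lam0 = tk + (k:ℝ) - s := by rw [htkdef]; ring
    rw [← h1]
    field_simp
  have hOPTge : tk * lam0 ≤ OPT := by nlinarith [hmidsum, hT, hsplit]
  have hOPTpos : 0 < OPT := lt_of_lt_of_le (mul_pos htk hlam0) hOPTge
  -- gamma facts
  have hargnn : (0:ℝ) ≤ 1 + 2 * ((k:ℝ) - s) / tk := by positivity
  have harg : γ ^ 2 = 1 + 2 * ((k:ℝ) - s) / tk := by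
    rw [hγ, Real.sq_sqrt]
    exact hargnn
  have hγ0 : 0 ≤ γ := hγ ▸ Real.sqrt_nonneg _
  have hγ1 : 1 ≤ γ := by nlinarith [harg, hγ0, div_nonneg (by linarith : (0:ℝ) ≤ 2*((k:ℝ)-s)) htk.le]
  have hγpos : 0 < γ := lt_of_lt_of_le one_pos hγ1
  have hαpos : 0 < α := by
    rw [hα]
    exact div_pos (mul_pos hγpos hOPTpos) (mul_pos hε hks)
  have hxpos : 0 < α⁻¹ := inv_pos.mpr hαpos
  -- the key eigenvalue vs alpha inequality
  have hkey : lam0 * α⁻¹ ≤ γ - 1 := by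
    have h2 : (γ^2 - 1) * tk = 2*((k:ℝ)-s) := by
      rw [harg]
      field_simp
      ring
    have h3 : ((k:ℝ)-s) ≤ (γ-1)*γ*tk := by nlinarith [hγ1, htk]
    have hchain : lam0 * ((1-ε)*((k:ℝ)-s)) ≤ (γ-1)*(γ*OPT) := by
      calc lam0 * ((1-ε)*((k:ℝ)-s)) ≤ lam0 * ((k:ℝ)-s) := by
            have h4 : (1-ε)*((k:ℝ)-s) ≤ (k:ℝ)-s := by nlinarith [hε0, hks]
            exact mul_le_mul_of_nonneg_left h4 hlam0.le
        _ ≤ lam0 * ((γ-1)*γ*tk) := mul_le_mul_of_nonneg_left h3 hlam0.le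
        _ = (γ-1)*γ*(tk*lam0) := by ring
        _ ≤ (γ-1)*γ*OPT := by
            have hγγ : 0 ≤ (γ-1)*γ := mul_nonneg (by linarith) hγpos.le
            exact mul_le_mul_of_nonneg_left hOPTge hγγ
        _ = (γ-1)*(γ*OPT) := by ring
    have hα' : lam0 ≤ (γ - 1) * α := by
      rw [hα, ← mul_div_assoc, le_div_iff₀ (mul_pos hε hks)]
      exact hchain
    calc lam0 * α⁻¹ ≤ ((γ-1)*α) * α⁻¹ := mul_le_mul_of_nonneg_right hα' hxpos.le
      _ = γ - 1 := by field_simp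
  -- the per-index quantities
  have hpos' : ∀ i, 0 < 1 + lam i * α⁻¹ :=
    fun i => add_pos_of_pos_of_nonneg one_pos (mul_nonneg (hnn i) hxpos.le)
  set f : Fin n → ℝ := fun i => lam i * α⁻¹ / (1 + lam i * α⁻¹) with hfdef
  have hf0 : ∀ i, 0 ≤ f i :=
    fun i => div_nonneg (mul_nonneg (hnn i) hxpos.le) (hpos' i).le
  have hf1 : ∀ i, f i ≤ 1 := fun i => by
    rw [hfdef]
    exact (div_le_one (hpos' i)).mpr (by linarith)
  have hfmid : ∀ i : Fin n, s ≤ (i:ℕ) → f i ≤ 1 - 1/γ := by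
    intro i hi
    have hle : lam i ≤ lam0 := hlam (by simpa [Fin.le_def] using hi)
    have hposl : 0 < 1 + lam0 * α⁻¹ := add_pos_of_pos_of_nonneg one_pos (mul_nonneg hlam0.le hxpos.le)
    have h1 : f i ≤ lam0 * α⁻¹ / (1 + lam0 * α⁻¹) := by
      rw [hfdef]
      dsimp only
      rw [div_le_div_iff₀ (hpos' i) hposl]
      nlinarith [hxpos, hle, hnn i]
    have h2 : lam0 * α⁻¹ / (1 + lam0 * α⁻¹) ≤ 1 - 1/γ := by
      have hform : 1 - 1/γ = (γ - 1)/γ := by field_simp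
      rw [hform, div_le_div_iff₀ hposl hγpos]
      nlinarith [hkey, mul_nonneg hlam0.le hxpos.le]
    exact h1.trans h2
  have hftail : ∀ i, f i ≤ lam i * α⁻¹ := fun i =>
    div_le_self (mul_nonneg (hnn i) hxpos.le) (by linarith [mul_nonneg (hnn i) hxpos.le])
  -- determinant and expectation of the size
  have hdet : (1 + α⁻¹ • (Aᵀ * A)).det = ∏ i, (1 + α⁻¹ * lam i) := det_prod_lam A lam heig α⁻¹
  have hDpos : 0 < ∏ i, (1 + α⁻¹ * lam i) :=
    Finset.prod_pos fun i _ => add_pos_of_pos_of_nonneg one_pos (mul_nonneg hxpos.le (hnn i))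
  have hEcard : dppExp A α (fun S => (S.card:ℝ)) = ∑ i, f i := by
    simp only [dppExp]
    rw [hdet, numer_card_eq A lam heig hpos', mul_div_assoc, div_self (ne_of_gt hDpos), mul_one]
  -- bound on the sum of f
  have hsumf : ∑ i, f i ≤ (k:ℝ) - ε*((k:ℝ)-s)/γ := by
    have hsplit1 := Finset.sum_filter_add_sum_filter_not Finset.univ
      (fun i : Fin n => (i:ℕ) < s) f
    have hsplit2 := Finset.sum_filter_add_sum_filter_not
      (Finset.univ.filter (fun i : Fin n => ¬ (i:ℕ) < s)) (fun i : Fin n => (i:ℕ) < k) f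
    have b1 : ∑ i ∈ Finset.univ.filter (fun i : Fin n => (i:ℕ) < s), f i ≤ (s:ℝ) := by
      have hcard : ((Finset.univ.filter (fun i : Fin n => (i:ℕ) < s)).card : ℝ) ≤ (s:ℝ) := by
        have h1 : (Finset.univ.filter (fun i : Fin n => (i:ℕ) < s)).card ≤ (Finset.range s).card := by
          refine Finset.card_le_card_of_injOn (fun i => (i:ℕ)) ?_ ?_
          · intro i hi
            simp only [Finset.mem_coe, Finset.mem_filter, Finset.mem_univ, true_and] at hi
            simpa using hi
          · intro a _ b _ hab
            exact Fin.ext hab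
        exact_mod_cast h1.trans_eq (Finset.card_range s)
      calc ∑ i ∈ Finset.univ.filter (fun i : Fin n => (i:ℕ) < s), f i
          ≤ (Finset.univ.filter (fun i : Fin n => (i:ℕ) < s)).card • (1:ℝ) :=
            Finset.sum_le_card_nsmul _ _ _ (fun i _ => hf1 i)
        _ = ((Finset.univ.filter (fun i : Fin n => (i:ℕ) < s)).card : ℝ) := by
            rw [nsmul_eq_mul, mul_one]
        _ ≤ (s:ℝ) := hcard
    have b2 : ∑ i ∈ (Finset.univ.filter (fun i : Fin n => ¬ (i:ℕ) < s)).filter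
        (fun i : Fin n => (i:ℕ) < k), f i ≤ ((k:ℝ)-s) * (1 - 1/γ) := by
      set P2 := (Finset.univ.filter (fun i : Fin n => ¬ (i:ℕ) < s)).filter
        (fun i : Fin n => (i:ℕ) < k) with hP2
      have hmem : ∀ i ∈ P2, s ≤ (i:ℕ) ∧ (i:ℕ) < k := by
        intro i hi
        simp only [hP2, Finset.filter_filter, Finset.mem_filter, Finset.mem_univ, true_and] at hi
        omega
      have hcard : (P2.card : ℝ) ≤ (k:ℝ) - s := by
        have h1 : P2.card ≤ (Finset.Ico s k).card := by
          refine Finset.card_le_card_of_injOn (fun i => (i:ℕ)) ?_ ?_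
          · intro i hi
            have := hmem i hi
            simp [Finset.mem_Ico, this.1, this.2]
          · intro a _ b _ hab
            exact Fin.ext hab
        calc (P2.card:ℝ) ≤ ((k - s : ℕ):ℝ) := by exact_mod_cast h1.trans_eq (Nat.card_Ico s k)
          _ = (k:ℝ) - s := by rw [Nat.cast_sub hsk.le]
      have hbnd : (0:ℝ) ≤ 1 - 1/γ := by
        have : 1/γ ≤ 1 := by
          rw [div_le_one hγpos]
          exact hγ1
        linarith
      calc ∑ i ∈ P2, f i ≤ P2.card • (1 - 1/γ) :=
            Finset.sum_le_card_nsmul _ _ _ (fun i hi => hfmid i (hmem i hi).1)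
        _ = (P2.card : ℝ) * (1 - 1/γ) := nsmul_eq_mul _ _
        _ ≤ ((k:ℝ)-s) * (1 - 1/γ) := mul_le_mul_of_nonneg_right hcard hbnd
    have b3 : ∑ i ∈ (Finset.univ.filter (fun i : Fin n => ¬ (i:ℕ) < s)).filter
        (fun i : Fin n => ¬ (i:ℕ) < k), f i ≤ (1-ε)*((k:ℝ)-s)/γ := by
      have hset : (Finset.univ.filter (fun i : Fin n => ¬ (i:ℕ) < s)).filter
          (fun i : Fin n => ¬ (i:ℕ) < k) = Finset.univ.filter (fun i : Fin n => k ≤ (i:ℕ)) := by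
        rw [Finset.filter_filter]
        ext i
        simp only [Finset.mem_filter, Finset.mem_univ, true_and]
        omega
      rw [hset]
      have h1 : ∑ i ∈ Finset.univ.filter (fun i : Fin n => k ≤ (i:ℕ)), f i ≤
          ∑ i ∈ Finset.univ.filter (fun i : Fin n => k ≤ (i:ℕ)), lam i * α⁻¹ :=
        Finset.sum_le_sum fun i _ => hftail i
      have h2 : ∑ i ∈ Finset.univ.filter (fun i : Fin n => k ≤ (i:ℕ)), lam i * α⁻¹
          = OPT * α⁻¹ := by
        rw [hOPTdef, opt, Finset.sum_mul]
      have h3 : OPT * α⁻¹ = (1-ε)*((k:ℝ)-s)/γ := by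
        rw [hα]
        field_simp
      linarith
    have hfinal : (s:ℝ) + ((k:ℝ)-s) * (1 - 1/γ) + (1-ε)*((k:ℝ)-s)/γ
        = (k:ℝ) - ε*((k:ℝ)-s)/γ := by
      field_simp
      ring
    have heq : (∑ i, f i) = (∑ i ∈ Finset.univ.filter (fun i : Fin n => (i:ℕ) < s), f i)
          + ((∑ i ∈ (Finset.univ.filter (fun i : Fin n => ¬ (i:ℕ) < s)).filter
              (fun i : Fin n => (i:ℕ) < k), f i)
            + (∑ i ∈ (Finset.univ.filter (fun i : Fin n => ¬ (i:ℕ) < s)).filter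
              (fun i : Fin n => ¬ (i:ℕ) < k), f i)) := by
      rw [hsplit2, hsplit1]
    rw [heq]
    linarith [b1, b2, b3, hfinal]
  constructor
  · have hEEr : dppExp A α (Er A) = α * (∑ i, f i) := by
      simp only [dppExp]
      rw [numer_Er_eq A (ne_of_gt hαpos), hdet, numer_card_eq A lam heig hpos',
        mul_div_assoc, mul_div_assoc, div_self (ne_of_gt hDpos), mul_one]
    have hRHS : (1 + (s:ℝ)/((k:ℝ)-s)) * γ * OPT / (1-ε) = α * k := by
      rw [hα]
      field_simp
      ring
    rw [hEEr, hRHS]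
    have hfk : ∑ i, f i ≤ (k:ℝ) := by
      have : 0 ≤ ε*((k:ℝ)-s)/γ := by positivity
      linarith
    exact mul_le_mul_of_nonneg_left hfk hαpos.le
  · rw [hEcard]
    exact hsumf
end CSSP
end

section
/- Orthogonal-simplex lower bound construction. Fix δ ∈ (0,1). Let a_{i,j} ∈ ℝ^m for i ∈ {1,...,t}, j ∈ {1,...,l_i} be unit vectors in general position such that Σ_{j=1}^{l_i} a_{i,j} = 0 for each i, and a_{i,j} ⟂ a_{i',j'} whenever i ≠ i'. Let v₁,...,v_t be unit vectors orthogonal to each other and to all the a_{i,j}. Then there exist positive scalars α_i, β_i for i ∈ {1,...,t} such that the matrix A whose columns are α_i·a_{i,j} + β_i·v_i (over all i, j) satisfies, for each i ∈ {1,...,t} and k_i = l₁ + ... + l_i − 1: min over subsets S of size k_i of Er_A(S)/OPT_{k_i} ≥ (1−δ)·l_i. -/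
open scoped BigOperators
open Matrix


namespace CSSP

variable {m n : ℕ}

/-! ### Auxiliary lemmas -/

lemma normsq_eucl {d : ℕ} (y : EuclideanSpace ℝ (Fin d)) : ‖y‖^2 = ∑ j, y j ^ 2 := by
  rw [EuclideanSpace.norm_eq, Real.sq_sqrt (by positivity)]
  simp [sq_abs]

lemma exists_mu {d : ℕ} (a : Fin d → EuclideanSpace ℝ (Fin m))
    (hinj : ∀ y : Fin d → ℝ, ∑ j, y j = 0 → ∑ j, y j • a j = 0 → y = 0) :
    ∃ c > 0, ∀ y : Fin d → ℝ, ∑ j, y j = 0 →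
      c * ∑ j, (y j)^2 ≤ ‖∑ j, y j • a j‖^2 := by
  let φ : EuclideanSpace ℝ (Fin d) →ₗ[ℝ] EuclideanSpace ℝ (Fin m) :=
    { toFun := fun y => ∑ j, y j • a j
      map_add' := by intro x y; simp [add_smul, Finset.sum_add_distrib]
      map_smul' := by intro c x; simp [smul_smul, Finset.smul_sum] }
  let ψ : EuclideanSpace ℝ (Fin d) →ₗ[ℝ] ℝ :=
    { toFun := fun y => ∑ j, y j
      map_add' := by intro x y; simp [Finset.sum_add_distrib]
      map_smul' := by intro c x; simp [Finset.mul_sum] }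
  let K := LinearMap.ker ψ
  let f := φ.comp K.subtype
  have hker : LinearMap.ker f = ⊥ := by
    rw [LinearMap.ker_eq_bot]
    intro x y hxy
    have h1 : (x : EuclideanSpace ℝ (Fin d)) - (y : EuclideanSpace ℝ (Fin d)) ∈ K :=
      K.sub_mem x.2 y.2
    have h2 : φ ((x : EuclideanSpace ℝ (Fin d)) - (y : EuclideanSpace ℝ (Fin d))) = 0 := by
      have : φ x.1 = φ y.1 := hxy
      simp [map_sub, this]
    have h3 := hinj ((x : EuclideanSpace ℝ (Fin d)) - (y : EuclideanSpace ℝ (Fin d)))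
      (by simpa [K, ψ] using h1) (by simpa [φ] using h2)
    have : (x : EuclideanSpace ℝ (Fin d)) = y := by
      have := sub_eq_zero.mp (funext (fun j => congrFun h3 j))
      exact congrArg (WithLp.toLp 2) this
    exact Subtype.ext this
  obtain ⟨C, hC, hanti⟩ := f.exists_antilipschitzWith hker
  refine ⟨((C:ℝ)^2)⁻¹, by positivity, ?_⟩
  intro y hy
  set Y : EuclideanSpace ℝ (Fin d) := WithLp.toLp 2 y with hY
  have hyK : Y ∈ K := by simpa [K, ψ] using hy
  have hb := hanti.le_mul_dist ⟨Y, hyK⟩ 0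
  simp only [map_zero, dist_zero_right] at hb
  have hb2 : ‖Y‖ ≤ C * ‖∑ j, y j • a j‖ := hb
  have h1 : ‖Y‖^2 ≤ C^2 * ‖∑ j, y j • a j‖^2 := by
    nlinarith [norm_nonneg Y, norm_nonneg (∑ j, y j • a j)]
  have h2 : ‖Y‖^2 = ∑ j, y j ^2 := normsq_eucl _
  rw [h2] at h1
  have hCpos : (0:ℝ) < (C:ℝ)^2 := by positivity
  rw [inv_mul_le_iff₀ hCpos]
  linarith

lemma inj_of_gen {d : ℕ} (a : Fin d → EuclideanSpace ℝ (Fin m))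
    (hsum : ∑ j, a j = 0)
    (hgen : ∀ j₀ : Fin d, LinearIndependent ℝ (fun j : {j : Fin d // j ≠ j₀} => a (j : Fin d))) :
    ∀ y : Fin d → ℝ, ∑ j, y j = 0 → ∑ j, y j • a j = 0 → y = 0 := by
  intro y hy0 hya
  rcases Nat.eq_zero_or_pos d with hd | hd
  · funext j; exact absurd j.isLt (by omega)
  · have j₀ : Fin d := ⟨0, hd⟩
    have hsplit : a j₀ + ∑ j ∈ Finset.univ.erase j₀, a j = 0 := by
      rw [Finset.add_sum_erase _ _ (Finset.mem_univ j₀)]; exact hsum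
    have ha0 : ∑ j ∈ Finset.univ.erase j₀, a j = -a j₀ := by
      rw [eq_neg_iff_add_eq_zero, add_comm]; exact hsplit
    have key : ∑ j ∈ Finset.univ.erase j₀, (y j - y j₀) • a j = 0 := by
      have e1 : ∑ j ∈ Finset.univ.erase j₀, (y j - y j₀) • a j
          = (∑ j ∈ Finset.univ.erase j₀, y j • a j)
            - y j₀ • ∑ j ∈ Finset.univ.erase j₀, a j := by
        rw [Finset.smul_sum, ← Finset.sum_sub_distrib]
        congr 1; funext j; rw [sub_smul]
      rw [e1, ha0]
      have e2 : ∑ j ∈ Finset.univ.erase j₀, y j • a j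
          = (∑ j, y j • a j) - y j₀ • a j₀ := by
        rw [eq_sub_iff_add_eq, add_comm]
        exact Finset.add_sum_erase _ (fun j => y j • a j) (Finset.mem_univ j₀)
      rw [e2, hya, smul_neg]
      abel
    have hconst : ∀ j : {j : Fin d // j ≠ j₀}, y (j : Fin d) - y j₀ = 0 := by
      have hli := (Fintype.linearIndependent_iff.mp (hgen j₀))
        (fun j : {j : Fin d // j ≠ j₀} => y (j : Fin d) - y j₀) ?_
      · exact hli
      · rw [← Finset.sum_subtype (Finset.univ.erase j₀)
          (fun x => by simp) (fun j => (y j - y j₀) • a j)]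
        exact key
    have hyall : ∀ j, y j = y j₀ := by
      intro j
      by_cases hj : j = j₀
      · rw [hj]
      · have := hconst ⟨j, hj⟩; simpa [sub_eq_zero] using this
    have hsum2 : (d : ℝ) * y j₀ = 0 := by
      rw [← hy0]
      rw [Finset.sum_congr rfl (fun j _ => hyall j)]
      simp [Finset.sum_const, mul_comm]
    have : y j₀ = 0 := by
      have hd' : (d:ℝ) ≠ 0 := by positivity
      exact (mul_eq_zero.mp hsum2).resolve_left hd'
    funext j; simp [hyall j, this]

section Expand
variable {t : ℕ} {l : Fin t → ℕ}

lemma norm_expand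
    (a : (i : Fin t) → Fin (l i) → EuclideanSpace ℝ (Fin m))
    (horth : ∀ (i i' : Fin t) (j : Fin (l i)) (j' : Fin (l i')),
      i ≠ i' → (inner ℝ (a i j) (a i' j') : ℝ) = 0)
    (v : Fin t → EuclideanSpace ℝ (Fin m))
    (hvunit : ∀ i, ‖v i‖ = 1)
    (hvorth : ∀ i i' : Fin t, i ≠ i' → (inner ℝ (v i) (v i') : ℝ) = 0)
    (hvaorth : ∀ (i i' : Fin t) (j : Fin (l i')), (inner ℝ (v i) (a i' j) : ℝ) = 0)
    (α β : Fin t → ℝ) (d : ((i : Fin t) × Fin (l i)) → ℝ) :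
    ‖∑ p : (i : Fin t) × Fin (l i), d p • (α p.1 • a p.1 p.2 + β p.1 • v p.1)‖^2
      = ∑ b, ((α b)^2 * ‖∑ j, d ⟨b,j⟩ • a b j‖^2 + (β b)^2 * (∑ j, d ⟨b,j⟩)^2) := by
  set w : Fin t → EuclideanSpace ℝ (Fin m) :=
    fun b => α b • (∑ j, d ⟨b,j⟩ • a b j) + ((β b) * (∑ j, d ⟨b,j⟩)) • v b with hw
  have hsplit : ∑ p : (i : Fin t) × Fin (l i), d p • (α p.1 • a p.1 p.2 + β p.1 • v p.1)
      = ∑ b, w b := by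
    rw [← Finset.univ_sigma_univ, Finset.sum_sigma]
    refine Finset.sum_congr rfl (fun b _ => ?_)
    rw [hw]
    simp only [smul_add, Finset.sum_add_distrib]
    congr 1
    · rw [Finset.smul_sum]
      exact Finset.sum_congr rfl (fun j _ => smul_comm _ _ _)
    · rw [mul_comm, mul_smul, ← Finset.sum_smul]
  rw [hsplit]
  have horthw : ∀ b b' : Fin t, b ≠ b' → (inner ℝ (w b) (w b') : ℝ) = 0 := by
    intro b b' hbb
    rw [hw]
    simp only [inner_add_left, inner_add_right, real_inner_smul_left, real_inner_smul_right,
      inner_sum, sum_inner]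
    have h1 : ∀ j j', (inner ℝ (a b j) (a b' j') : ℝ) = 0 := fun j j' => horth _ _ _ _ hbb
    have h2 : ∀ j, (inner ℝ (a b j) (v b') : ℝ) = 0 := by
      intro j; rw [real_inner_comm]; exact hvaorth _ _ _
    have h3 : ∀ j, (inner ℝ (v b) (a b' j) : ℝ) = 0 := fun j => hvaorth _ _ _
    have h4 : (inner ℝ (v b) (v b') : ℝ) = 0 := hvorth _ _ hbb
    simp [real_inner_smul_left, real_inner_smul_right, h1, h2, h3, h4]
  have hns : ‖∑ b, w b‖^2 = ∑ b, ‖w b‖^2 := by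
    rw [← real_inner_self_eq_norm_sq, inner_sum]
    refine Finset.sum_congr rfl (fun b _ => ?_)
    rw [sum_inner, Finset.sum_eq_single b]
    · rw [real_inner_self_eq_norm_sq]
    · intro b' _ hbb; exact horthw b' b hbb
    · intro h; exact absurd (Finset.mem_univ b) h
  rw [hns]
  refine Finset.sum_congr rfl (fun b _ => ?_)
  rw [hw]
  have hcross : (inner ℝ (α b • (∑ j, d ⟨b,j⟩ • a b j)) (((β b) * (∑ j, d ⟨b,j⟩)) • v b) : ℝ) = 0 := by
    rw [real_inner_smul_left, real_inner_smul_right, sum_inner]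
    have : ∀ j, (inner ℝ (d ⟨b,j⟩ • a b j) (v b) : ℝ) = 0 := by
      intro j; rw [real_inner_smul_left, real_inner_comm]
      rw [hvaorth b b j]; ring
    simp [this]
  rw [norm_add_sq_real, hcross]
  rw [norm_smul, norm_smul, hvunit]
  simp [abs_mul, mul_pow, sq_abs]

lemma card_le_blocks (l : Fin t → ℕ) (i : Fin t) :
    (Finset.univ.filter (fun p : (i' : Fin t) × Fin (l i') => p.1 ≤ i)).card
      = ∑ i' ∈ Finset.Iic i, l i' := by
  have : Finset.univ.filter (fun p : (i' : Fin t) × Fin (l i') => p.1 ≤ i)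
      = (Finset.Iic i).sigma (fun i' => (Finset.univ : Finset (Fin (l i')))) := by
    ext p; simp [Finset.mem_sigma]
  rw [this, Finset.card_sigma]
  simp

lemma card_lt_blocks (l : Fin t → ℕ) (i : Fin t) :
    (Finset.univ.filter (fun p : (i' : Fin t) × Fin (l i') => p.1 < i)).card
      = ∑ i' ∈ Finset.Iio i, l i' := by
  have : Finset.univ.filter (fun p : (i' : Fin t) × Fin (l i') => p.1 < i)
      = (Finset.Iio i).sigma (fun i' => (Finset.univ : Finset (Fin (l i')))) := by
    ext p; simp [Finset.mem_sigma]
  rw [this, Finset.card_sigma]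
  simp

lemma sum_Iic_split' (l : Fin t → ℕ) (i : Fin t) :
    ∑ i' ∈ Finset.Iic i, l i' = (∑ i' ∈ Finset.Iio i, l i') + l i := by
  rw [← Finset.Iio_insert, Finset.sum_insert (by simp)]
  omega

lemma sum_split_three (i : Fin t) (F : Fin t → ℝ) :
    ∑ b, F b = (∑ b ∈ Finset.Iio i, F b) + F i + ∑ b ∈ Finset.Ioi i, F b := by
  rw [← Finset.sum_add_sum_compl (Finset.Iic i),
    show (Finset.Iic i)ᶜ = Finset.Ioi i by ext b; simp [not_le],
    ← Finset.Iio_insert, Finset.sum_insert (by simp)]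
  ring

end Expand

lemma span_rep {ι : Type*} [Fintype ι] [DecidableEq ι] (A : Matrix (Fin m) ι ℝ)
    (S : Finset ι) (u : EuclideanSpace ℝ (Fin m)) (hu : u ∈ colSpan A S) :
    ∃ γ : ι → ℝ, (∀ p ∉ S, γ p = 0) ∧ u = ∑ p, γ p • col A p := by
  have hset : {x | ∃ j ∈ S, x = col A j}
      = Set.range (fun p : {p // p ∈ S} => col A (p : ι)) := by
    ext x
    constructor
    · rintro ⟨j, hj, rfl⟩; exact ⟨⟨j, hj⟩, rfl⟩
    · rintro ⟨⟨j, hj⟩, rfl⟩; exact ⟨j, hj, rfl⟩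
  rw [colSpan, hset] at hu
  obtain ⟨c, hc⟩ := (Submodule.mem_span_range_iff_exists_fun ℝ).mp hu
  refine ⟨fun p => if h : p ∈ S then c ⟨p, h⟩ else 0, fun p hp => by simp [hp], ?_⟩
  rw [← hc, Finset.univ_eq_attach]
  symm
  beta_reduce
  calc ∑ p : ι, (if h : p ∈ S then c ⟨p, h⟩ else 0) • col A p
      = ∑ p ∈ S, (if h : p ∈ S then c ⟨p, h⟩ else 0) • col A p := by
        refine (Finset.sum_subset (Finset.subset_univ S) ?_).symm
        intro p _ hp; simp [hp]
    _ = ∑ p ∈ S.attach, (if h : (p:ι) ∈ S then c ⟨p, h⟩ else 0) • col A (p:ι) :=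
        (Finset.sum_attach S (fun p => (if h : p ∈ S then c ⟨p, h⟩ else 0) • col A p)).symm
    _ = ∑ p ∈ S.attach, c p • col A (p:ι) := by
        refine Finset.sum_congr rfl (fun p _ => ?_)
        rw [dif_pos p.2]

lemma rank_le_card_span {ι : Type*} [Fintype ι] (B : Matrix (Fin m) ι ℝ)
    (G : Finset (Fin m → ℝ))
    (h : ∀ p, (fun x => B x p) ∈ Submodule.span ℝ (G : Set (Fin m → ℝ))) :
    B.rank ≤ G.card := by
  have hle : LinearMap.range B.mulVecLin ≤ Submodule.span ℝ (G : Set (Fin m → ℝ)) := by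
    rw [Matrix.range_mulVecLin, Submodule.span_le]
    rintro x ⟨p, rfl⟩
    exact h p
  calc B.rank = Module.finrank ℝ (LinearMap.range B.mulVecLin) := rfl
    _ ≤ Module.finrank ℝ (Submodule.span ℝ (G : Set (Fin m → ℝ))) := Submodule.finrank_mono hle
    _ ≤ G.card := finrank_span_finset_le_card G

lemma optRank_le_frob {ι : Type*} [Fintype ι] [DecidableEq ι]
    (A B : Matrix (Fin m) ι ℝ) (k : ℕ) (h : B.rank ≤ k) :
    optRank A k ≤ frobSq (A - B) := by
  apply csInf_le
  · refine ⟨0, fun x hx => ?_⟩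
    obtain ⟨B', _, rfl⟩ := hx
    apply Finset.sum_nonneg
    intro i _
    apply Finset.sum_nonneg
    intro j _
    positivity
  · exact ⟨B, h, rfl⟩

lemma er_nonneg {ι : Type*} [Fintype ι] (A : Matrix (Fin m) ι ℝ) (S : Finset ι) :
    0 ≤ Er A S := by
  unfold Er
  apply Finset.sum_nonneg
  intro j _
  positivity

set_option maxHeartbeats 2000000 in
/-- Orthogonal-simplex lower bound construction (Lemma 6 of the paper). -/
theorem simplex_lower_bound (m t : ℕ) (l : Fin t → ℕ)
    (δ : ℝ) (hδ0 : 0 < δ) (hδ1 : δ < 1)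
    (a : (i : Fin t) → Fin (l i) → EuclideanSpace ℝ (Fin m))
    (hunit : ∀ i j, ‖a i j‖ = 1)
    (hsum : ∀ i, ∑ j, a i j = 0)
    (horth : ∀ (i i' : Fin t) (j : Fin (l i)) (j' : Fin (l i')),
      i ≠ i' → (inner ℝ (a i j) (a i' j') : ℝ) = 0)
    (hgen : ∀ (i : Fin t) (j₀ : Fin (l i)),
      LinearIndependent ℝ (fun j : {j : Fin (l i) // j ≠ j₀} => a i (j : Fin (l i))))
    (v : Fin t → EuclideanSpace ℝ (Fin m))
    (hvunit : ∀ i, ‖v i‖ = 1)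
    (hvorth : ∀ i i' : Fin t, i ≠ i' → (inner ℝ (v i) (v i') : ℝ) = 0)
    (hvaorth : ∀ (i i' : Fin t) (j : Fin (l i')), (inner ℝ (v i) (a i' j) : ℝ) = 0) :
    ∃ α β : Fin t → ℝ, (∀ i, 0 < α i) ∧ (∀ i, 0 < β i) ∧
      ∀ (A : Matrix (Fin m) ((i : Fin t) × Fin (l i)) ℝ),
        (∀ (p : (i : Fin t) × Fin (l i)) (x : Fin m),
          A x p = α p.1 * a p.1 p.2 x + β p.1 * v p.1 x) →
        ∀ i : Fin t, ∀ S : Finset ((i' : Fin t) × Fin (l i')),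
          S.card = (∑ i' ∈ Finset.Iic i, l i') - 1 →
          (1 - δ) * (l i : ℝ) * optRank A ((∑ i' ∈ Finset.Iic i, l i') - 1) ≤ Er A S := by
  rcases Nat.eq_zero_or_pos t with ht0 | htpos
  · subst ht0
    exact ⟨fun _ => 1, fun _ => 1, fun i => i.elim0, fun i => i.elim0,
      fun A hA i => i.elim0⟩
  -- setup of constants
  have hinj : ∀ i : Fin t, ∀ y : Fin (l i) → ℝ,
      ∑ j, y j = 0 → ∑ j, y j • a i j = 0 → y = 0 :=
    fun i => inj_of_gen (a i) (hsum i) (hgen i)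
  choose μf hμfpos hμf using fun i : Fin t => exists_mu (a i) (hinj i)
  set M : ℕ := Finset.univ.sup l with hMdef
  have hMl : ∀ b, l b ≤ M := fun b => Finset.le_sup (Finset.mem_univ b)
  have hune : (Finset.univ : Finset (Fin t)).Nonempty := ⟨⟨0, htpos⟩, Finset.mem_univ _⟩
  set μm : ℝ := Finset.univ.inf' hune μf with hμmdef
  have hμmpos : 0 < μm := by
    rw [hμmdef, Finset.lt_inf'_iff]; exact fun b _ => hμfpos b
  have hμmle : ∀ b, μm ≤ μf b := fun b => Finset.inf'_le _ (Finset.mem_univ b)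
  set h : ℝ := min ((δ/2) * μm / ((M:ℝ)^2+1)) 1 with hhdef
  have hMnn : (0:ℝ) ≤ (M:ℝ) := Nat.cast_nonneg M
  have hhpos : 0 < h := by
    apply lt_min _ one_pos
    positivity
  have hh1 : h ≤ 1 := min_le_right _ _
  have hhb : ∀ b, ((l b : ℝ))^2 * h ≤ (δ/2) * μf b := by
    intro b
    have h1 : h ≤ (δ/2) * μm / ((M:ℝ)^2+1) := min_le_left _ _
    have h2 : ((l b : ℝ))^2 ≤ (M:ℝ)^2 := by
      have : ((l b : ℝ)) ≤ (M:ℝ) := Nat.cast_le.mpr (hMl b)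
      nlinarith [(Nat.cast_nonneg (l b) : (0:ℝ) ≤ (l b : ℝ))]
    have h3 : (δ/2) * μm ≤ (δ/2) * μf b := by
      have := hμmle b; nlinarith
    have h4 : ((l b:ℝ))^2 * h ≤ (M:ℝ)^2 * ((δ/2) * μm / ((M:ℝ)^2+1)) := by
      apply mul_le_mul h2 h1 (le_of_lt hhpos) (by positivity)
    have h5 : (M:ℝ)^2 * ((δ/2) * μm / ((M:ℝ)^2+1)) ≤ (δ/2) * μm := by
      rw [mul_div_assoc']
      rw [div_le_iff₀ (by positivity)]
      nlinarith [hμmpos, hδ0]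
    linarith
  set e : ℝ := min (δ*h/(4*(M:ℝ)*t+1)) (min (h/(6*(M:ℝ)^2*t+1)) 1) with hedef
  have hepos : 0 < e := by
    apply lt_min (by positivity) (lt_min (by positivity) one_pos)
  have he1 : e ≤ 1 := le_trans (min_le_right _ _) (min_le_right _ _)
  have he4 : 4*(M:ℝ)*t*e ≤ δ*h := by
    have h1 : e ≤ δ*h/(4*(M:ℝ)*t+1) := min_le_left _ _
    have h2 : 4*(M:ℝ)*t*e ≤ 4*(M:ℝ)*t*(δ*h/(4*(M:ℝ)*t+1)) := by
      apply mul_le_mul_of_nonneg_left h1 (by positivity)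
    have h3 : 4*(M:ℝ)*t*(δ*h/(4*(M:ℝ)*t+1)) ≤ δ*h := by
      rw [mul_div_assoc', div_le_iff₀ (by positivity)]
      nlinarith [hhpos, hδ0, mul_nonneg hMnn (Nat.cast_nonneg t : (0:ℝ) ≤ t)]
    linarith
  have he6 : 6*(M:ℝ)^2*t*e ≤ h := by
    have h1 : e ≤ h/(6*(M:ℝ)^2*t+1) := le_trans (min_le_right _ _) (min_le_left _ _)
    have h2 : 6*(M:ℝ)^2*t*e ≤ 6*(M:ℝ)^2*t*(h/(6*(M:ℝ)^2*t+1)) := by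
      apply mul_le_mul_of_nonneg_left h1 (by positivity)
    have h3 : 6*(M:ℝ)^2*t*(h/(6*(M:ℝ)^2*t+1)) ≤ h := by
      rw [mul_div_assoc', div_le_iff₀ (by positivity)]
      nlinarith [hhpos, sq_nonneg (M:ℝ), mul_nonneg (mul_nonneg hMnn hMnn) (Nat.cast_nonneg t : (0:ℝ) ≤ t)]
    linarith
  set se : ℝ := Real.sqrt e with hsedef
  set sh : ℝ := Real.sqrt h with hshdef
  have hsepos : 0 < se := Real.sqrt_pos.mpr hepos
  have hshpos : 0 < sh := Real.sqrt_pos.mpr hhpos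
  set av : Fin t → ℝ := fun b => se ^ ((b:ℕ)+1) with havdef
  set bv : Fin t → ℝ := fun b => sh * se ^ ((b:ℕ)+1) with hbvdef
  have havpos : ∀ b, 0 < av b := fun b => pow_pos hsepos _
  have hbvpos : ∀ b, 0 < bv b := fun b => mul_pos hshpos (pow_pos hsepos _)
  have havsq : ∀ b, (av b)^2 = e^((b:ℕ)+1) := by
    intro b
    rw [havdef]
    simp only
    rw [← pow_mul, mul_comm ((b:ℕ)+1) 2, pow_mul, Real.sq_sqrt (le_of_lt hepos)]
  have hbvsq : ∀ b, (bv b)^2 = h * e^((b:ℕ)+1) := by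
    intro b
    rw [hbvdef]
    simp only
    rw [mul_pow, ← pow_mul, mul_comm ((b:ℕ)+1) 2, pow_mul,
      Real.sq_sqrt (le_of_lt hepos), Real.sq_sqrt (le_of_lt hhpos)]
  clear_value av bv se sh e h μm M
  refine ⟨av, bv, havpos, hbvpos, ?_⟩
  intro A hA i S hS
  by_cases hli0 : l i = 0
  · rw [hli0]
    simp only [Nat.cast_zero, mul_zero, zero_mul]
    exact er_nonneg A S
  have hli : 0 < l i := Nat.pos_of_ne_zero hli0
  set k : ℕ := (∑ i' ∈ Finset.Iic i, l i') - 1 with hkdef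
  -- column form
  have hcol : ∀ p : (i' : Fin t) × Fin (l i'),
      col A p = av p.1 • a p.1 p.2 + bv p.1 • v p.1 := by
    intro p
    ext x
    simp only [col, hA p x, PiLp.add_apply, PiLp.smul_apply, smul_eq_mul]
  ---- Part A : optRank bound
  have hoptbound : optRank A k ≤ (l i : ℝ) * (h * e^((i:ℕ)+1))
      + ∑ b ∈ Finset.Ioi i, (l b : ℝ) * (e^((b:ℕ)+1) + h * e^((b:ℕ)+1)) := by
    have hj₀ : 0 < l i := hli
    set j₀ : Fin (l i) := ⟨0, hli⟩ with hj₀def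
    set B : Matrix (Fin m) ((i' : Fin t) × Fin (l i')) ℝ :=
      fun x p => if p.1 < i then A x p else if p.1 = i then av p.1 * a p.1 p.2 x else 0
      with hBdef
    set G1 : Finset (Fin m → ℝ) := (Finset.univ.filter
      (fun p : (i' : Fin t) × Fin (l i') => p.1 < i)).image (fun p => (fun x => A x p)) with hG1
    set G2 : Finset (Fin m → ℝ) :=
      (Finset.univ.erase j₀).image (fun j => (fun x => a i j x)) with hG2
    set G := G1 ∪ G2 with hGdef
    have haspan : ∀ j : Fin (l i),
        (fun x => a i j x) ∈ Submodule.span ℝ (G : Set (Fin m → ℝ)) := by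
      intro j
      by_cases hj : j = j₀
      · rw [hj]
        have hsumfun : (∑ j' : Fin (l i), (fun x => a i j' x)) = (0 : Fin m → ℝ) := by
          funext x
          have := congrArg (fun w : EuclideanSpace ℝ (Fin m) => WithLp.ofLp w x) (hsum i)
          simpa [Finset.sum_apply, WithLp.ofLp_sum] using this
        have hrep : (fun x => a i j₀ x)
            = -∑ j' ∈ Finset.univ.erase j₀, (fun x => a i j' x) := by
          have hae : (fun x => a i j₀ x) + ∑ j' ∈ Finset.univ.erase j₀, (fun x => a i j' x)
              = ∑ j' : Fin (l i), (fun x => a i j' x) :=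
            Finset.add_sum_erase _ (fun j' => (fun x => a i j' x)) (Finset.mem_univ j₀)
          rw [eq_neg_iff_add_eq_zero, hae]
          exact hsumfun
        rw [hrep]
        apply Submodule.neg_mem
        apply Submodule.sum_mem
        intro j' hj'
        apply Submodule.subset_span
        apply Finset.mem_coe.mpr
        apply Finset.mem_union_right
        exact Finset.mem_image_of_mem _ hj'
      · apply Submodule.subset_span
        apply Finset.mem_coe.mpr
        apply Finset.mem_union_right
        exact Finset.mem_image_of_mem _ (Finset.mem_erase.mpr ⟨hj, Finset.mem_univ _⟩)
    have hBspan : ∀ p : (i' : Fin t) × Fin (l i'),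
        (fun x => B x p) ∈ Submodule.span ℝ (G : Set (Fin m → ℝ)) := by
      intro p
      by_cases h1 : p.1 < i
      · have hcB : (fun x => B x p) = (fun x => A x p) := by
          funext x; simp [hBdef, h1]
        rw [hcB]
        apply Submodule.subset_span
        apply Finset.mem_coe.mpr
        apply Finset.mem_union_left
        exact Finset.mem_image_of_mem _ (by simp [h1])
      · by_cases h2 : p.1 = i
        · obtain ⟨b, j⟩ := p
          simp only at h2
          subst h2
          have hcB : (fun x => B x ⟨b, j⟩) = av b • (fun x => a b j x) := by
            funext x; simp [hBdef]
          rw [hcB]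
          exact Submodule.smul_mem _ _ (haspan j)
        · have hcB : (fun x => B x p) = (0 : Fin m → ℝ) := by
            funext x; simp [hBdef, h1, h2]
          rw [hcB]
          exact Submodule.zero_mem _
    have hcard : G.card ≤ k := by
      have hc1 : G1.card ≤ ∑ i' ∈ Finset.Iio i, l i' :=
        Finset.card_image_le.trans (le_of_eq (card_lt_blocks l i))
      have hc2 : G2.card ≤ l i - 1 := by
        refine Finset.card_image_le.trans ?_
        rw [Finset.card_erase_of_mem (Finset.mem_univ _)]
        simp
      have := sum_Iic_split' l i
      calc G.card ≤ G1.card + G2.card := Finset.card_union_le _ _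
        _ ≤ (∑ i' ∈ Finset.Iio i, l i') + (l i - 1) := add_le_add hc1 hc2
        _ = k := by rw [hkdef]; omega
    have hrank : B.rank ≤ k := le_trans (rank_le_card_span B G hBspan) hcard
    refine le_trans (optRank_le_frob A B k hrank) (le_of_eq ?_)
    unfold frobSq
    rw [Finset.sum_comm]
    have hvsq : ∀ b, ∑ x, (v b x)^2 = 1 := by
      intro b
      have hv := normsq_eucl (v b)
      rw [hvunit b] at hv
      simpa using hv.symm
    have hasq : ∀ b (j : Fin (l b)), ∑ x, (a b j x)^2 = 1 := by
      intro b j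
      have ha' := normsq_eucl (a b j)
      rw [hunit b j] at ha'
      simpa using ha'.symm
    have hav0 : ∀ b (j : Fin (l b)), ∑ x, a b j x * v b x = 0 := by
      intro b j
      have := hvaorth b b j
      rw [PiLp.inner_apply] at this
      simp only [RCLike.inner_apply, conj_trivial] at this
      rw [← this]
    have hcolsum : ∀ p : (i' : Fin t) × Fin (l i'), ∑ x, ((A - B) x p)^2
        = (if p.1 < i then 0 else if p.1 = i then h*e^((i:ℕ)+1)
            else e^((p.1:ℕ)+1) + h*e^((p.1:ℕ)+1)) := by
      intro p
      by_cases h1 : p.1 < i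
      · rw [if_pos h1]
        apply Finset.sum_eq_zero
        intro x _
        rw [Matrix.sub_apply]
        simp [Matrix.sub_apply, hBdef, h1]
      · by_cases h2 : p.1 = i
        · rw [if_neg h1, if_pos h2]
          have hterm : ∀ x, (A - B) x p = bv p.1 * v p.1 x := by
            intro x
            rw [Matrix.sub_apply]
            simp only [Matrix.sub_apply, hBdef, if_neg h1, if_pos h2, hA p x]
            ring
          rw [Finset.sum_congr rfl (fun x _ => by rw [hterm x])]
          have : ∑ x, (bv p.1 * v p.1 x)^2 = (bv p.1)^2 * ∑ x, (v p.1 x)^2 := by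
            rw [Finset.mul_sum]
            exact Finset.sum_congr rfl (fun x _ => by ring)
          rw [this, hvsq, mul_one, hbvsq, h2]
        · rw [if_neg h1, if_neg h2]
          have hterm : ∀ x, (A - B) x p = av p.1 * a p.1 p.2 x + bv p.1 * v p.1 x := by
            intro x
            rw [Matrix.sub_apply]
            simp only [Matrix.sub_apply, hBdef, if_neg h1, if_neg h2, hA p x]
            ring
          rw [Finset.sum_congr rfl (fun x _ => by rw [hterm x])]
          have hexp : ∑ x, (av p.1 * a p.1 p.2 x + bv p.1 * v p.1 x)^2
              = (av p.1)^2 * (∑ x, (a p.1 p.2 x)^2)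
                + 2 * av p.1 * bv p.1 * (∑ x, a p.1 p.2 x * v p.1 x)
                + (bv p.1)^2 * (∑ x, (v p.1 x)^2) := by
            rw [Finset.mul_sum, Finset.mul_sum, Finset.mul_sum,
              ← Finset.sum_add_distrib, ← Finset.sum_add_distrib]
            exact Finset.sum_congr rfl (fun x _ => by ring)
          rw [hexp, hasq, hav0, hvsq, havsq, hbvsq]
          ring
    rw [Finset.sum_congr rfl (fun p _ => hcolsum p)]
    rw [← Finset.univ_sigma_univ, Finset.sum_sigma]
    have hconstsum : ∀ b : Fin t, (∑ _j : Fin (l b),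
        (if b < i then (0:ℝ) else if b = i then h*e^((i:ℕ)+1)
          else e^((b:ℕ)+1) + h*e^((b:ℕ)+1)))
        = (l b : ℝ) * (if b < i then (0:ℝ) else if b = i then h*e^((i:ℕ)+1)
          else e^((b:ℕ)+1) + h*e^((b:ℕ)+1)) := by
      intro b
      rw [Finset.sum_const, Finset.card_univ, Fintype.card_fin, nsmul_eq_mul]
    rw [Finset.sum_congr rfl (fun b _ => hconstsum b)]
    rw [sum_split_three i]
    have hIio : ∑ b ∈ Finset.Iio i, (l b : ℝ) * (if b < i then (0:ℝ)
        else if b = i then h*e^((i:ℕ)+1) else e^((b:ℕ)+1) + h*e^((b:ℕ)+1)) = 0 := by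
      apply Finset.sum_eq_zero
      intro b hb
      rw [if_pos (Finset.mem_Iio.mp hb), mul_zero]
    have hImid : (l i : ℝ) * (if i < i then (0:ℝ)
        else if i = i then h*e^((i:ℕ)+1) else e^((i:ℕ)+1) + h*e^((i:ℕ)+1))
        = (l i : ℝ) * (h * e^((i:ℕ)+1)) := by
      rw [if_neg (lt_irrefl i), if_pos rfl]
    have hIoi : ∑ b ∈ Finset.Ioi i, (l b : ℝ) * (if b < i then (0:ℝ)
        else if b = i then h*e^((i:ℕ)+1) else e^((b:ℕ)+1) + h*e^((b:ℕ)+1))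
        = ∑ b ∈ Finset.Ioi i, (l b : ℝ) * (e^((b:ℕ)+1) + h*e^((b:ℕ)+1)) := by
      refine Finset.sum_congr rfl (fun b hb => ?_)
      have hbi := Finset.mem_Ioi.mp hb
      rw [if_neg (by omega), if_neg (by omega)]
    rw [hIio, hImid, hIoi]
    ring
  ---- Part B : Er lower bound
  obtain ⟨pstar, hpF, hpS⟩ : ∃ p ∈ Finset.univ.filter
      (fun p : (i' : Fin t) × Fin (l i') => p.1 ≤ i), p ∉ S := by
    apply Finset.not_subset.mp
    intro hsub
    have hc := Finset.card_le_card hsub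
    rw [card_le_blocks, hS] at hc
    have : 1 ≤ ∑ i' ∈ Finset.Iic i, l i' := by
      calc 1 ≤ l i := hli
        _ ≤ ∑ i' ∈ Finset.Iic i, l i' :=
            Finset.single_le_sum (f := l) (fun b _ => Nat.zero_le (l b)) (Finset.mem_Iic.mpr le_rfl)
    omega
  have hple : pstar.1 ≤ i := by simpa using hpF
  have hlpp : 0 < l pstar.1 := pstar.2.pos
  have hErbound : (1 - δ/2) * ((l pstar.1 : ℝ))^2 * (h * e^((pstar.1 : ℕ)+1)) ≤ Er A S := by
    set u : EuclideanSpace ℝ (Fin m) :=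
      ((colSpan A S).orthogonalProjectionOnto (col A pstar) : EuclideanSpace ℝ (Fin m)) with hu
    have huV : u ∈ colSpan A S := SetLike.coe_mem _
    obtain ⟨γ, hγ0, hγ⟩ := span_rep A S u huV
    set d : ((i' : Fin t) × Fin (l i')) → ℝ :=
      fun p => (if p = pstar then 1 else 0) - γ p with hd
    have hdiff : col A pstar - u = ∑ p, d p • (av p.1 • a p.1 p.2 + bv p.1 • v p.1) := by
      have hcc : ∑ p, d p • (av p.1 • a p.1 p.2 + bv p.1 • v p.1)
          = ∑ p, d p • col A p := by
        refine Finset.sum_congr rfl (fun p _ => ?_); rw [hcol p]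
      rw [hcc]
      simp only [hd, sub_smul, Finset.sum_sub_distrib, ite_smul, one_smul, zero_smul]
      rw [Finset.sum_ite_eq' Finset.univ pstar (fun p => col A p),
        if_pos (Finset.mem_univ _), ← hγ]
    have hexp := norm_expand (l := l) a horth v hvunit hvorth hvaorth av bv d
    set s : ℝ := ∑ j, d ⟨pstar.1, j⟩ with hs
    set ND : ℝ := ‖∑ j, d ⟨pstar.1, j⟩ • a pstar.1 j‖^2 with hND
    have hterm : (av pstar.1)^2 * ND + (bv pstar.1)^2 * s^2
        ≤ ‖col A pstar - u‖^2 := by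
      rw [hdiff, hexp]
      exact Finset.single_le_sum
        (f := fun b => (av b)^2 * ‖∑ j, d ⟨b,j⟩ • a b j‖^2 + (bv b)^2 * (∑ j, d ⟨b,j⟩)^2)
        (fun b _ => by positivity) (Finset.mem_univ pstar.1)
    set L : ℝ := ((l pstar.1 : ℕ) : ℝ) with hL
    have hL1 : 1 ≤ L := by rw [hL]; exact_mod_cast hlpp
    set y : Fin (l pstar.1) → ℝ := fun j => L * d ⟨pstar.1, j⟩ - s with hy
    have hy0 : ∑ j, y j = 0 := by
      simp only [hy]
      rw [Finset.sum_sub_distrib, ← Finset.mul_sum, Finset.sum_const, Finset.card_univ,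
        Fintype.card_fin, nsmul_eq_mul, ← hs, hL]
      ring
    have hya : ∑ j, y j • a pstar.1 j = L • ∑ j, d ⟨pstar.1, j⟩ • a pstar.1 j := by
      simp only [hy, sub_smul, Finset.sum_sub_distrib]
      rw [Finset.smul_sum]
      have h1 : ∑ j, (L * d ⟨pstar.1, j⟩) • a pstar.1 j
          = ∑ j, L • d ⟨pstar.1,j⟩ • a pstar.1 j := by
        refine Finset.sum_congr rfl (fun j _ => ?_); rw [mul_smul]
      have h2 : ∑ j : Fin (l pstar.1), s • a pstar.1 j = 0 := by
        rw [← Finset.smul_sum, hsum pstar.1, smul_zero]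
      rw [h1, h2, sub_zero]
    have hmu := hμf pstar.1 y hy0
    rw [hya] at hmu
    have hnormL : ‖L • ∑ j, d ⟨pstar.1, j⟩ • a pstar.1 j‖^2 = L^2 * ND := by
      rw [norm_smul, Real.norm_eq_abs, mul_pow, sq_abs, hND]
    rw [hnormL] at hmu
    have hd1 : d pstar = 1 := by
      rw [hd]; simp [hγ0 pstar hpS]
    have hysq : (L - s)^2 ≤ ∑ j, (y j)^2 := by
      have hle := Finset.single_le_sum (f := fun j => (y j)^2)
        (fun j _ => sq_nonneg _) (Finset.mem_univ pstar.2)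
      have hyj : y pstar.2 = L - s := by
        show L * d ⟨pstar.1, pstar.2⟩ - s = L - s
        rw [show (⟨pstar.1, pstar.2⟩ : (i' : Fin t) × Fin (l i')) = pstar from rfl, hd1]
        ring
      calc (L - s)^2 = (y pstar.2)^2 := by rw [hyj]
        _ ≤ ∑ j, (y j)^2 := hle
    have hca := hhb pstar.1
    rw [← hL] at hca
    have hge : (1 - δ/2) * (L^2*h) ≤ (δ/2) * μf pstar.1 := by
      have hd2 : (0:ℝ) ≤ (δ/2) * (L^2*h) := by positivity
      linarith [hca, hd2]
    have hprod : 0 ≤ (L^2*h)*L^2*((δ/2)*μf pstar.1 - (1-δ/2)*(L^2*h)) := by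
      apply mul_nonneg (by positivity)
      linarith [hge]
    have hApc : 0 < μf pstar.1 + L^2*h := by
      have := hμfpos pstar.1; positivity
    have hquad : (1 - δ/2) * (L^2*h) * L^2
        ≤ μf pstar.1 * (L - s)^2 + (L^2*h) * s^2 := by
      have h4 := mul_le_mul_of_nonneg_left hge (show (0:ℝ) ≤ (L^2*h)*L^2 by positivity)
      have hid : (μf pstar.1 + L^2*h) * (μf pstar.1*(L-s)^2 + (L^2*h)*s^2)
          = (μf pstar.1)*(L^2*h)*L^2 + (μf pstar.1*(L-s) - (L^2*h)*s)^2 := by ring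
      have hsq := sq_nonneg (μf pstar.1*(L-s) - (L^2*h)*s)
      have h5 : (μf pstar.1 + L^2*h) * ((1 - δ/2) * (L^2*h) * L^2)
          ≤ (μf pstar.1 + L^2*h) * (μf pstar.1*(L-s)^2 + (L^2*h)*s^2) := by
        rw [hid]
        linarith [h4, hsq]
      exact le_of_mul_le_mul_left h5 hApc
    have hmu2 : μf pstar.1 * (L - s)^2 ≤ L^2 * ND := by
      calc μf pstar.1 * (L - s)^2 ≤ μf pstar.1 * ∑ j, (y j)^2 :=
            mul_le_mul_of_nonneg_left hysq (le_of_lt (hμfpos _))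
        _ ≤ L^2 * ND := hmu
    have hstep : (1 - δ/2) * (L^2 * h) ≤ ND + h * s^2 := by
      have hL2 : (0:ℝ) < L^2 := by positivity
      rw [← mul_le_mul_iff_of_pos_left hL2]
      have hexpand : L^2 * ((1 - δ/2) * (L^2 * h)) = (1 - δ/2) * (L^2*h) * L^2 := by ring
      have hexpand2 : L^2 * (ND + h * s^2) = L^2 * ND + (L^2*h) * s^2 := by ring
      rw [hexpand, hexpand2]
      linarith [hquad, hmu2]
    have hE1 : (0:ℝ) < e^((pstar.1:ℕ)+1) := pow_pos hepos _
    have hfinal : (1 - δ/2) * L^2 * (h * e^((pstar.1:ℕ)+1))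
        ≤ (av pstar.1)^2 * ND + (bv pstar.1)^2 * s^2 := by
      rw [havsq, hbvsq]
      have h6 := mul_le_mul_of_nonneg_left hstep (le_of_lt hE1)
      linarith [h6]
    have hEr : ‖col A pstar - u‖^2 ≤ Er A S := by
      unfold Er
      exact Finset.single_le_sum
        (f := fun p => ‖col A p - ((colSpan A S).orthogonalProjectionOnto (col A p) :
          EuclideanSpace ℝ (Fin m))‖^2)
        (fun p _ => by positivity) (Finset.mem_univ pstar)
    calc (1 - δ/2) * ((l pstar.1 : ℝ))^2 * (h * e^((pstar.1 : ℕ)+1))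
        = (1 - δ/2) * L^2 * (h * e^((pstar.1:ℕ)+1)) := by rw [hL]
      _ ≤ (av pstar.1)^2 * ND + (bv pstar.1)^2 * s^2 := hfinal
      _ ≤ ‖col A pstar - u‖^2 := hterm
      _ ≤ Er A S := hEr
  ---- Part C : combine
  have hLi1 : (1:ℝ) ≤ (l i : ℝ) := by exact_mod_cast hli
  have hLp1 : (1:ℝ) ≤ (l pstar.1 : ℝ) := by exact_mod_cast hlpp
  have htR : (1:ℝ) ≤ (t:ℝ) := by exact_mod_cast htpos
  have hMR : ∀ b, ((l b : ℝ)) ≤ (M:ℝ) := fun b => Nat.cast_le.mpr (hMl b)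
  have hM1 : (1:ℝ) ≤ (M:ℝ) := le_trans hLi1 (hMR i)
  have hST : ∑ b ∈ Finset.Ioi i, (l b:ℝ) * (e^((b:ℕ)+1) + h*e^((b:ℕ)+1))
      ≤ (t:ℝ) * (2*(M:ℝ)*e^((i:ℕ)+2)) := by
    have hb : ∀ b ∈ Finset.Ioi i, (l b:ℝ) * (e^((b:ℕ)+1) + h*e^((b:ℕ)+1))
        ≤ 2*(M:ℝ)*e^((i:ℕ)+2) := by
      intro b hbmem
      have hib : (i:ℕ) < (b:ℕ) := Fin.lt_def.mp (Finset.mem_Ioi.mp hbmem)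
      have hpow : e^((b:ℕ)+1) ≤ e^((i:ℕ)+2) :=
        pow_le_pow_of_le_one hepos.le he1 (by omega)
      have hpnn : (0:ℝ) ≤ e^((b:ℕ)+1) := pow_nonneg hepos.le _
      have hqnn : (0:ℝ) ≤ e^((i:ℕ)+2) := pow_nonneg hepos.le _
      have h1 : e^((b:ℕ)+1) + h*e^((b:ℕ)+1) ≤ 2*e^((i:ℕ)+2) := by
        have h2 := mul_le_mul_of_nonneg_right hh1 hpnn
        linarith
      calc (l b:ℝ) * (e^((b:ℕ)+1) + h*e^((b:ℕ)+1)) ≤ (M:ℝ) * (2*e^((i:ℕ)+2)) := by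
            apply mul_le_mul (hMR b) h1 (add_nonneg hpnn (mul_nonneg hhpos.le hpnn)) (by linarith)
        _ = 2*(M:ℝ)*e^((i:ℕ)+2) := by ring
    calc ∑ b ∈ Finset.Ioi i, (l b:ℝ) * (e^((b:ℕ)+1) + h*e^((b:ℕ)+1))
        ≤ (Finset.Ioi i).card • (2*(M:ℝ)*e^((i:ℕ)+2)) := Finset.sum_le_card_nsmul _ _ _ hb
      _ = ((Finset.Ioi i).card : ℝ) * (2*(M:ℝ)*e^((i:ℕ)+2)) := nsmul_eq_mul _ _
      _ ≤ (t:ℝ) * (2*(M:ℝ)*e^((i:ℕ)+2)) := by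
          apply mul_le_mul_of_nonneg_right _
            (mul_nonneg (mul_nonneg (by norm_num : (0:ℝ) ≤ 2) (Nat.cast_nonneg M))
              (pow_nonneg hepos.le _))
          have hcard : (Finset.Ioi i).card ≤ t := by
            simpa using Finset.card_le_univ (Finset.Ioi i)
          exact_mod_cast hcard
  have hD : optRank A k ≤ (l i:ℝ)*(h*e^((i:ℕ)+1)) + 2*(M:ℝ)*(t:ℝ)*e^((i:ℕ)+2) := by
    refine le_trans hoptbound ?_
    have hr : (t:ℝ) * (2*(M:ℝ)*e^((i:ℕ)+2)) = 2*(M:ℝ)*(t:ℝ)*e^((i:ℕ)+2) := by ring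
    linarith [hST]
  have hfac : (0:ℝ) ≤ (1-δ) * (l i:ℝ) := mul_nonneg (by linarith) (by linarith [hLi1])
  have hmain : (1-δ) * (l i:ℝ) * ((l i:ℝ)*(h*e^((i:ℕ)+1)) + 2*(M:ℝ)*(t:ℝ)*e^((i:ℕ)+2))
      ≤ (1 - δ/2) * ((l pstar.1:ℝ))^2 * (h*e^((pstar.1:ℕ)+1)) := by
    rcases eq_or_lt_of_le hple with heq | hlt
    · rw [heq]
      have he2 : e^((i:ℕ)+2) = e * e^((i:ℕ)+1) := by rw [pow_succ]; ring
      rw [he2]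
      have hE1nn : (0:ℝ) ≤ e^((i:ℕ)+1) := pow_nonneg hepos.le _
      have hLinn : (0:ℝ) ≤ (l i:ℝ) := by linarith
      have key : (1-δ)*(l i:ℝ)*(2*(M:ℝ)*(t:ℝ)*e) ≤ (δ/2)*((l i:ℝ)*(l i:ℝ)*h) := by
        have p2 := mul_le_mul_of_nonneg_left he4 hLinn
        have p3nn : (0:ℝ) ≤ (δ/2)*((l i:ℝ)*h) := by
          apply mul_nonneg (by linarith) (mul_nonneg hLinn hhpos.le)
        have p3 := mul_le_mul_of_nonneg_left hLi1 p3nn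
        have p1 : (0:ℝ) ≤ δ*((l i:ℝ)*(2*(M:ℝ)*(t:ℝ)*e)) := by
          apply mul_nonneg (by linarith)
          apply mul_nonneg hLinn
          exact mul_nonneg (by positivity) hepos.le
        linarith [p1, p2, p3]
      have hbr : (1-δ)*(l i:ℝ)*((l i:ℝ)*h) + (1-δ)*(l i:ℝ)*(2*(M:ℝ)*(t:ℝ)*e)
          ≤ (1-δ/2)*((l i:ℝ))^2*h := by linarith [key]
      have := mul_le_mul_of_nonneg_right hbr hE1nn
      linarith [this]
    · -- pstar.1 < i
      have hvlt : (pstar.1 : ℕ) < (i : ℕ) := hlt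
      have hEI1 : e^((i:ℕ)+1) ≤ e^((pstar.1:ℕ)+2) :=
        pow_le_pow_of_le_one hepos.le he1 (by omega)
      have hEI2 : e^((i:ℕ)+2) ≤ e^((pstar.1:ℕ)+2) :=
        pow_le_pow_of_le_one hepos.le he1 (by omega)
      have hEP2 : e^((pstar.1:ℕ)+2) = e * e^((pstar.1:ℕ)+1) := by rw [pow_succ]; ring
      have hEP1nn : (0:ℝ) ≤ e^((pstar.1:ℕ)+1) := pow_nonneg hepos.le _
      have hEP2nn : (0:ℝ) ≤ e^((pstar.1:ℕ)+2) := pow_nonneg hepos.le _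
      have hEI1nn : (0:ℝ) ≤ e^((i:ℕ)+1) := pow_nonneg hepos.le _
      have hLinn : (0:ℝ) ≤ (l i:ℝ) := by linarith
      have hMnnR : (0:ℝ) ≤ (M:ℝ) := by linarith
      -- X bound
      have hX0 : (0:ℝ) ≤ (l i:ℝ)*(h*e^((i:ℕ)+1)) + 2*(M:ℝ)*(t:ℝ)*e^((i:ℕ)+2) := by
        apply add_nonneg
        · exact mul_nonneg hLinn (mul_nonneg hhpos.le hEI1nn)
        · apply mul_nonneg (by positivity) (pow_nonneg hepos.le _)
      have hX : (l i:ℝ)*(h*e^((i:ℕ)+1)) + 2*(M:ℝ)*(t:ℝ)*e^((i:ℕ)+2)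
          ≤ ((M:ℝ)*h + 2*(M:ℝ)*(t:ℝ))*e^((pstar.1:ℕ)+2) := by
        have b1 : (l i:ℝ)*(h*e^((i:ℕ)+1)) ≤ (M:ℝ)*(h*e^((pstar.1:ℕ)+2)) := by
          apply mul_le_mul (hMR i) (mul_le_mul_of_nonneg_left hEI1 hhpos.le)
            (mul_nonneg hhpos.le hEI1nn) hMnnR
        have b2 : 2*(M:ℝ)*(t:ℝ)*e^((i:ℕ)+2) ≤ 2*(M:ℝ)*(t:ℝ)*e^((pstar.1:ℕ)+2) :=
          mul_le_mul_of_nonneg_left hEI2 (by positivity)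
        linarith [b1, b2]
      have hfacM : (1-δ) * (l i:ℝ) ≤ (M:ℝ) := by
        have := mul_le_mul_of_nonneg_right (show (1-δ:ℝ) ≤ 1 by linarith) hLinn
        linarith [hMR i]
      have hs1 : (1-δ) * (l i:ℝ) * ((l i:ℝ)*(h*e^((i:ℕ)+1)) + 2*(M:ℝ)*(t:ℝ)*e^((i:ℕ)+2))
          ≤ (M:ℝ) * (((M:ℝ)*h + 2*(M:ℝ)*(t:ℝ))*e^((pstar.1:ℕ)+2)) :=
        mul_le_mul hfacM hX hX0 hMnnR
      have hY : (M:ℝ) * ((M:ℝ)*h + 2*(M:ℝ)*(t:ℝ)) ≤ 3*(M:ℝ)^2*(t:ℝ) := by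
        have q1 := mul_le_mul_of_nonneg_left hh1 (sq_nonneg (M:ℝ))
        have q2 := mul_le_mul_of_nonneg_left htR (sq_nonneg (M:ℝ))
        nlinarith [q1, q2]
      have hs2 : (M:ℝ) * (((M:ℝ)*h + 2*(M:ℝ)*(t:ℝ))*e^((pstar.1:ℕ)+2))
          ≤ (3*(M:ℝ)^2*(t:ℝ)) * e^((pstar.1:ℕ)+2) := by
        have := mul_le_mul_of_nonneg_right hY hEP2nn
        linarith [this]
      have hWe : (3*(M:ℝ)^2*(t:ℝ)) * e ≤ h/2 := by linarith [he6]
      have hs3 : (3*(M:ℝ)^2*(t:ℝ)) * e^((pstar.1:ℕ)+2) ≤ (h/2) * e^((pstar.1:ℕ)+1) := by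
        rw [hEP2]
        have := mul_le_mul_of_nonneg_right hWe hEP1nn
        linarith [this]
      have hs4 : (h/2) * e^((pstar.1:ℕ)+1)
          ≤ (1 - δ/2) * ((l pstar.1:ℝ))^2 * (h*e^((pstar.1:ℕ)+1)) := by
        have hq : (1:ℝ)/2 ≤ (1 - δ/2) * ((l pstar.1:ℝ))^2 := by
          have hsq1 : (1:ℝ) ≤ ((l pstar.1:ℝ))^2 := by nlinarith [hLp1]
          have hhalf : (0:ℝ) ≤ 1 - δ/2 := by linarith
          have := mul_le_mul_of_nonneg_left hsq1 hhalf
          linarith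
        have := mul_le_mul_of_nonneg_right hq (mul_nonneg hhpos.le hEP1nn)
        linarith [this]
      linarith [hs1, hs2, hs3, hs4]
  calc (1-δ) * (l i:ℝ) * optRank A k
      ≤ (1-δ) * (l i:ℝ) * ((l i:ℝ)*(h*e^((i:ℕ)+1)) + 2*(M:ℝ)*(t:ℝ)*e^((i:ℕ)+2)) :=
        mul_le_mul_of_nonneg_left hD hfac
    _ ≤ (1 - δ/2) * ((l pstar.1:ℝ))^2 * (h*e^((pstar.1:ℕ)+1)) := hmain
    _ ≤ Er A S := hErbound

end CSSP
end
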